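/- arXiv:1901.00493 — 4 statements merged into one kernel-verified Lean document; each statement's English description precedes it below -/
import Mathlib

section
/- As formal power series, (∏_{m≥1} (1 - x^m)) · (∑_{n≥0} ρ(n) x^n) = ∑_{h≥0} x^h · ∏_{m≥1, m≠h} (1 - x^m), where for h = 0 the product on the right is over all m ≥ 1. -/
/-- Coefficient of `x^n` in Euler's product `∏_{m ≥ 1} (1 - x^m)` (the pentagonal
number theorem sequence); factors with `m > n` do not affect this coefficient, so the
product may be truncated at `m = n`. -/
noncomputable def sigma0 (n : ℕ) : ℤ :=
  PowerSeries.coeff (R := ℤ) n (∏ m ∈ Finset.Icc 1 n, (1 - PowerSeries.X ^ m))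

/-- Coefficient of `x^n` in `∏_{m ≥ 1, m ≠ j} (1 - x^m)` (the `j`-laced sequence);
for `j = 0` this is the full Euler product. -/
noncomputable def sigmaJ (j n : ℕ) : ℤ :=
  PowerSeries.coeff (R := ℤ) n (∏ m ∈ (Finset.Icc 1 n).erase j, (1 - PowerSeries.X ^ m))

/-- `ρ(0) = 1`, and for `n ≥ 1`, `ρ(n)` is the number of positive divisors of `n`. -/
def rho (n : ℕ) : ℤ := if n = 0 then 1 else (n.divisors.card : ℤ)

/-- Integer-indexed `ρ`, vanishing on negative arguments. -/
def rhoZ (m : ℤ) : ℤ := if 0 ≤ m then rho m.toNat else 0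

open PowerSeries Finset

noncomputable def geomS (h : ℕ) : PowerSeries ℤ :=
  PowerSeries.mk (fun j => if h ∣ j then 1 else 0)

lemma coeff_X_pow_mul' (f : PowerSeries ℤ) (h k : ℕ) :
    PowerSeries.coeff (R := ℤ) k (X ^ h * f) = if h ≤ k then PowerSeries.coeff (R := ℤ) (k - h) f else 0 := by
  rw [mul_comm, PowerSeries.coeff_mul_X_pow']

lemma one_sub_mul_geomS (h : ℕ) (hh : 1 ≤ h) : (1 - X ^ h) * geomS h = 1 := by
  ext k
  rw [sub_mul, one_mul, map_sub, coeff_X_pow_mul']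
  simp only [geomS, PowerSeries.coeff_mk, PowerSeries.coeff_one]
  rcases le_or_gt h k with hle | hlt
  · have hk : k ≠ 0 := by omega
    have hiff : h ∣ k - h ↔ h ∣ k := by
      constructor
      · intro hd
        have := Nat.dvd_add hd (dvd_refl h)
        rwa [Nat.sub_add_cancel hle] at this
      · intro hd; exact Nat.dvd_sub hd dvd_rfl
    by_cases hdvd : h ∣ k <;> simp [hdvd, hle, hiff, hk]
  · have hk0 : h ∣ k ↔ k = 0 := by
      constructor
      · intro hd
        rcases Nat.eq_zero_or_pos k with h0 | h0
        · exact h0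
        · exact absurd (Nat.le_of_dvd h0 hd) (by omega)
      · rintro rfl; exact dvd_zero h
    have : ¬ h ≤ k := by omega
    by_cases hk : k = 0 <;> simp [hk0, this, hk] <;> omega



/-- The σ-sequence: `σ(n) = ∑_{j=0}^{n} σ_j(n - j)`, the coefficient of `x^n` in the
σ-function `∑_{h ≥ 0} x^h ∏_{m ≥ 1, m ≠ h} (1 - x^m)`. -/
noncomputable def sigmaSeq (n : ℕ) : ℤ := ∑ j ∈ Finset.range (n+1), sigmaJ j (n - j)

/-- Coefficientwise form of
`(∏_{m≥1} (1 - x^m)) · (∑_{n≥0} ρ(n) x^n) = ∑_{h≥0} x^h ∏_{m≥1, m≠h} (1 - x^m)`: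
in degree `n` the products may be truncated at `m = n` and the sum at `h = n`. -/
theorem stmt2 (n : ℕ) :
    PowerSeries.coeff (R := ℤ) n
        ((∏ m ∈ Finset.Icc 1 n, (1 - PowerSeries.X ^ m)) *
          PowerSeries.mk (fun k => rho k)) =
    ∑ h ∈ Finset.range (n+1),
      PowerSeries.coeff (R := ℤ) n
        (PowerSeries.X ^ h * ∏ m ∈ (Finset.Icc 1 n).erase h, (1 - PowerSeries.X ^ m)) := by
  set P := ∏ m ∈ Finset.Icc 1 n, (1 - PowerSeries.X ^ m : PowerSeries ℤ) with hP
  set G : PowerSeries ℤ := 1 + ∑ h ∈ Icc 1 n, X ^ h * geomS h with hG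
  -- coefficients of G up to n agree with rho
  have hcoeff : ∀ k : ℕ, k ≤ n → PowerSeries.coeff (R := ℤ) k G = rho k := by
    intro k hk
    rw [hG, map_add, map_sum]
    simp only [coeff_X_pow_mul']
    rcases eq_or_ne k 0 with rfl | hk0
    · rw [Finset.sum_eq_zero, PowerSeries.coeff_one]
      · simp [rho]
      · intro h hh
        rw [mem_Icc] at hh
        rw [if_neg (by omega)]
    · have h1 : ∀ h ∈ Icc 1 n,
          (if h ≤ k then PowerSeries.coeff (R := ℤ) (k - h) (geomS h) else 0)
            = if h ∈ k.divisors then (1 : ℤ) else 0 := by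
        intro h hh
        rw [mem_Icc] at hh
        simp only [geomS, PowerSeries.coeff_mk, Nat.mem_divisors]
        rcases le_or_gt h k with hle | hlt
        · have hiff : h ∣ k - h ↔ h ∣ k := by
            constructor
            · intro hd
              have := Nat.dvd_add hd (dvd_refl h)
              rwa [Nat.sub_add_cancel hle] at this
            · intro hd; exact Nat.dvd_sub hd dvd_rfl
          simp [hle, hiff, hk0]
        · have : ¬ h ∣ k := fun hd =>
            absurd (Nat.le_of_dvd (Nat.pos_of_ne_zero hk0) hd) (by omega)
          simp [this, not_le.mpr hlt]
      rw [Finset.sum_congr rfl h1, Finset.sum_ite_mem]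
      have hsub : Icc 1 n ∩ k.divisors = k.divisors := by
        apply Finset.inter_eq_right.mpr
        intro d hd
        rw [Nat.mem_divisors] at hd
        rw [mem_Icc]
        have := Nat.le_of_dvd (Nat.pos_of_ne_zero hk0) hd.1
        have := Nat.pos_of_dvd_of_pos hd.1 (Nat.pos_of_ne_zero hk0)
        omega
      rw [hsub, Finset.sum_const, PowerSeries.coeff_one, if_neg hk0]
      simp [rho, hk0]
  -- LHS = coeff n (P * G)
  have hLHS : PowerSeries.coeff (R := ℤ) n (P * PowerSeries.mk (fun k => rho k))
      = PowerSeries.coeff (R := ℤ) n (P * G) := by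
    rw [PowerSeries.coeff_mul, PowerSeries.coeff_mul]
    refine Finset.sum_congr rfl fun p hp => ?_
    rw [Finset.HasAntidiagonal.mem_antidiagonal] at hp
    rw [PowerSeries.coeff_mk, hcoeff p.2 (by omega)]
  -- RHS terms for h ≥ 1
  have key : ∀ h ∈ Icc 1 n,
      (X ^ h * ∏ m ∈ (Finset.Icc 1 n).erase h, (1 - PowerSeries.X ^ m) : PowerSeries ℤ)
        = P * (X ^ h * geomS h) := by
    intro h hh
    have hh' := hh
    rw [mem_Icc] at hh'
    have hPe : P = (1 - X ^ h) * ∏ m ∈ (Finset.Icc 1 n).erase h, (1 - PowerSeries.X ^ m) :=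
      (Finset.mul_prod_erase _ _ hh).symm
    rw [hPe]
    calc (X ^ h * ∏ m ∈ (Finset.Icc 1 n).erase h, (1 - PowerSeries.X ^ m) : PowerSeries ℤ)
        = (X ^ h * ∏ m ∈ (Finset.Icc 1 n).erase h, (1 - PowerSeries.X ^ m)) *
            ((1 - X ^ h) * geomS h) := by
          rw [one_sub_mul_geomS h hh'.1, mul_one]
      _ = (1 - X ^ h) * (∏ m ∈ (Finset.Icc 1 n).erase h, (1 - PowerSeries.X ^ m)) *
            (X ^ h * geomS h) := by ring
  -- split the RHS sum
  have hsplit : Finset.range (n+1) = insert 0 (Icc 1 n) := by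
    ext x; simp [Nat.lt_succ_iff]; omega
  rw [hsplit, Finset.sum_insert (by simp), hLHS]
  rw [Finset.sum_congr rfl fun h hh => congrArg _ (key h hh)]
  rw [hG, mul_add, mul_one, map_add, Finset.mul_sum, map_sum]
  simp [P]
end

section
/- The coefficient σ_0(n) of x^n in ∏_{m≥1}(1 - x^m) satisfies: σ_0(n) = (-1)^i if n = (3i² + i)/2 for some integer i (positive, negative, or zero), and σ_0(n) = 0 otherwise. -/
open Finset



def ParS (n : ℕ) : Finset (Finset ℕ) :=
  ((Finset.Icc 1 n).powerset).filter (fun S => ∑ x ∈ S, x = n)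

lemma mem_ParS {n : ℕ} {S : Finset ℕ} : S ∈ ParS n ↔ (0 ∉ S ∧ ∑ x ∈ S, x = n) := by
  simp only [ParS, mem_filter, mem_powerset]
  constructor
  · rintro ⟨hsub, hsum⟩
    refine ⟨fun h0 => ?_, hsum⟩
    have := hsub h0; simp at this
  · rintro ⟨h0, hsum⟩
    refine ⟨fun x hx => ?_, hsum⟩
    have h1 : 1 ≤ x := by
      rcases Nat.eq_zero_or_pos x with h | h
      · exact absurd (h ▸ hx) h0
      · exact h
    have h2 : x ≤ n := by
      calc x = id x := rfl
      _ ≤ ∑ y ∈ S, y := Finset.single_le_sum (fun i _ => Nat.zero_le i) hx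
      _ = n := hsum
    simp [h1, h2]

lemma sigma0_eq (n : ℕ) : sigma0 n = ∑ S ∈ ParS n, (-1 : ℤ) ^ S.card := by
  unfold sigma0
  have h : (∏ m ∈ Finset.Icc 1 n, (1 - PowerSeries.X ^ m : PowerSeries ℤ))
      = ∑ S ∈ (Finset.Icc 1 n).powerset,
          (PowerSeries.C (R := ℤ) ((-1) ^ S.card)) * PowerSeries.X ^ (∑ x ∈ S, x) := by
    have h2 := Finset.prod_add (fun m => (-(PowerSeries.X ^ m) : PowerSeries ℤ)) (fun _ => 1)
        (Finset.Icc 1 n)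
    simp only [Finset.prod_const_one, mul_one] at h2
    calc (∏ m ∈ Finset.Icc 1 n, (1 - PowerSeries.X ^ m : PowerSeries ℤ))
        = ∏ m ∈ Finset.Icc 1 n, ((-(PowerSeries.X ^ m) : PowerSeries ℤ) + 1) := by
          apply Finset.prod_congr rfl; intro m _; ring
      _ = ∑ S ∈ (Finset.Icc 1 n).powerset, ∏ i ∈ S, (-(PowerSeries.X ^ i) : PowerSeries ℤ) := h2
      _ = _ := by
          refine Finset.sum_congr rfl (fun S _ => ?_)
          have : ∀ i ∈ S, (-(PowerSeries.X ^ i) : PowerSeries ℤ)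
              = (-1) * PowerSeries.X ^ i := by intro i _; ring
          rw [Finset.prod_congr rfl this, Finset.prod_mul_distrib, Finset.prod_const,
            Finset.prod_pow_eq_pow_sum]
          simp [map_pow]
  rw [h, map_sum]
  have e : ∀ S ∈ (Finset.Icc 1 n).powerset,
      PowerSeries.coeff (R := ℤ) n ((PowerSeries.C (R := ℤ) ((-1) ^ S.card)) * PowerSeries.X ^ (∑ x ∈ S, x))
        = if ∑ x ∈ S, x = n then (-1 : ℤ) ^ S.card else 0 := by
    intro S _
    rw [PowerSeries.coeff_C_mul, PowerSeries.coeff_X_pow]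
    by_cases hc : ∑ x ∈ S, x = n
    · simp [hc]
    · rw [if_neg hc, if_neg (fun h => hc h.symm), mul_zero]
  rw [Finset.sum_congr rfl e, ← Finset.sum_filter]
  rfl


def aa (S : Finset ℕ) : ℕ := S.sup id
noncomputable def ss (S : Finset ℕ) : ℕ := sInf (S : Set ℕ)
def bb (S : Finset ℕ) : ℕ := ((Finset.range (aa S)).filter (fun m => m ∉ S)).sup id

lemma le_aa {S : Finset ℕ} {x : ℕ} (hx : x ∈ S) : x ≤ aa S := Finset.le_sup (f := id) hx

lemma sup_id_mem {S : Finset ℕ} (h : S.Nonempty) : S.sup id ∈ S := by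
  have h1 : S.sup id = S.max' h :=
    le_antisymm (Finset.sup_le fun x hx => S.le_max' x hx)
      (Finset.le_sup (f := id) (S.max'_mem h))
  rw [h1]; exact S.max'_mem h

lemma aa_mem {S : Finset ℕ} (h : S.Nonempty) : aa S ∈ S := sup_id_mem h

lemma aa_eq_of {S : Finset ℕ} {x : ℕ} (hx : x ∈ S) (h : ∀ y ∈ S, y ≤ x) : aa S = x :=
  le_antisymm (Finset.sup_le h) (le_aa hx)

lemma ss_le {S : Finset ℕ} {x : ℕ} (hx : x ∈ S) : ss S ≤ x := Nat.sInf_le hx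

lemma ss_mem {S : Finset ℕ} (h : S.Nonempty) : ss S ∈ S := by
  have : (S : Set ℕ).Nonempty := by exact_mod_cast h
  exact_mod_cast Nat.sInf_mem this

lemma ss_eq_of {S : Finset ℕ} {x : ℕ} (hx : x ∈ S) (h : ∀ y ∈ S, x ≤ y) : ss S = x :=
  le_antisymm (ss_le hx) (h _ (ss_mem ⟨x, hx⟩))

lemma bb_spec {S : Finset ℕ} (h : S.Nonempty) (h0 : 0 ∉ S) :
    bb S ∉ S ∧ bb S < aa S ∧ ∀ y, bb S < y → y ≤ aa S → y ∈ S := by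
  have ha : 1 ≤ aa S := by
    have := aa_mem h
    rcases Nat.eq_zero_or_pos (aa S) with h' | h'
    · exact absurd (h' ▸ this) h0
    · exact h'
  have h0f : 0 ∈ (Finset.range (aa S)).filter (fun m => m ∉ S) := by
    simp only [Finset.mem_filter, Finset.mem_range]
    exact ⟨ha, h0⟩
  have hbmem : bb S ∈ (Finset.range (aa S)).filter (fun m => m ∉ S) :=
    sup_id_mem ⟨0, h0f⟩
  simp only [Finset.mem_filter, Finset.mem_range] at hbmem
  refine ⟨hbmem.2, hbmem.1, fun y hy1 hy2 => ?_⟩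
  rcases eq_or_lt_of_le hy2 with h' | h'
  · exact h' ▸ aa_mem h
  by_contra hyS
  have : y ≤ bb S := Finset.le_sup (f := id) (by simp [h', hyS])
  omega

lemma bb_le_of {S : Finset ℕ} {x : ℕ} (h : ∀ y, x < y → y < aa S → y ∈ S) : bb S ≤ x := by
  apply Finset.sup_le
  intro y hy
  show y ≤ x
  simp only [Finset.mem_filter, Finset.mem_range] at hy
  by_contra hc
  exact hy.2 (h y (by omega) hy.1)

noncomputable def FF (S : Finset ℕ) : Finset ℕ :=
  if ss S ≤ aa S - bb S then
    insert (aa S + 1) ((S.erase (ss S)).erase (aa S + 1 - ss S))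
  else
    insert (aa S - bb S) (insert (bb S) (S.erase (aa S)))

def Exc (S : Finset ℕ) : Prop :=
  ∃ k : ℕ, S = Finset.Icc (k + 1) (2 * k + 1) ∨ S = Finset.Icc (k + 1) (2 * k)

lemma aa_Icc {u v : ℕ} (h : u ≤ v) : aa (Finset.Icc u v) = v :=
  aa_eq_of (by simp [h]) (fun y hy => (Finset.mem_Icc.1 hy).2)

lemma ss_Icc {u v : ℕ} (h : u ≤ v) : ss (Finset.Icc u v) = u :=
  ss_eq_of (by simp [h]) (fun y hy => (Finset.mem_Icc.1 hy).1)

lemma caseA {S : Finset ℕ} (h0 : 0 ∉ S) (hne : S.Nonempty) (hexc : ¬ Exc S)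
    (hbr : ss S ≤ aa S - bb S) :
    (0 ∉ FF S) ∧ (FF S).Nonempty ∧ (∑ x ∈ FF S, x = ∑ x ∈ S, x) ∧
    (S.card = (FF S).card + 1) ∧ ¬ Exc (FF S) ∧
    (¬ (ss (FF S) ≤ aa (FF S) - bb (FF S))) ∧
    insert (aa (FF S) - bb (FF S)) (insert (bb (FF S)) ((FF S).erase (aa (FF S)))) = S := by
  obtain ⟨hb, hba, hIcc⟩ := bb_spec hne h0
  have hsmem : ss S ∈ S := ss_mem hne
  have hamem : aa S ∈ S := aa_mem hne
  have h1 : ∀ x ∈ S, 1 ≤ x := fun x hx => by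
    rcases Nat.eq_zero_or_pos x with h | h
    · exact absurd (h ▸ hx) h0
    · exact h
  have hs1 : 1 ≤ ss S := h1 _ hsmem
  have hsa : ss S ≤ aa S := le_aa hsmem
  have hsb : ss S ≤ bb S + 1 := ss_le (hIcc _ (Nat.lt_succ_self _) hba)
  -- 2 * ss S ≤ aa S
  have h2s : 2 * ss S ≤ aa S := by
    by_contra hc
    have hb1 : bb S = ss S - 1 := by
      have : ss S ≤ aa S - bb S := hbr
      omega
    have ha1 : aa S = 2 * ss S - 1 := by omega
    have hSeq : S = Finset.Icc (ss S) (2 * ss S - 1) := by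
      ext x
      simp only [Finset.mem_Icc]
      constructor
      · intro hx; exact ⟨ss_le hx, by have := le_aa hx; omega⟩
      · intro hx; exact hIcc x (by omega) (by omega)
    have e1 : ss S - 1 + 1 = ss S := by omega
    have e2 : 2 * (ss S - 1) + 1 = 2 * ss S - 1 := by omega
    exact hexc ⟨ss S - 1, Or.inl (hSeq.trans (by rw [e1, e2]))⟩
  have hcmem : aa S + 1 - ss S ∈ S := hIcc _ (by omega) (by omega)
  have hcs : ss S < aa S + 1 - ss S := by omega
  have htop : aa S + 1 ∉ S := fun h => by have := le_aa h; omega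
  have hFS : FF S = insert (aa S + 1) ((S.erase (ss S)).erase (aa S + 1 - ss S)) := by
    rw [FF, if_pos hbr]
  set T := insert (aa S + 1) ((S.erase (ss S)).erase (aa S + 1 - ss S)) with hTdef
  have hmemT : ∀ x, x ∈ T ↔ (x = aa S + 1 ∨ (x ≠ aa S + 1 - ss S ∧ x ≠ ss S ∧ x ∈ S)) := by
    intro x
    simp [hTdef, Finset.mem_insert, Finset.mem_erase]
  have hcT : aa S + 1 - ss S ∉ T := by
    rw [hmemT]; push_neg
    exact ⟨by omega, fun h => absurd rfl h⟩
  -- aa T = aa S + 1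
  have haT : aa T = aa S + 1 := by
    apply aa_eq_of (by rw [hmemT]; left; rfl)
    intro y hy
    rcases (hmemT y).1 hy with h | h
    · omega
    · have := le_aa h.2.2; omega
  -- all elements of T are ≥ ss S + 1
  have hTlow : ∀ y ∈ T, ss S + 1 ≤ y := by
    intro y hy
    rcases (hmemT y).1 hy with h | h
    · omega
    · have := ss_le h.2.2; have := h.2.1; omega
  have hTne : T.Nonempty := ⟨aa S + 1, by rw [hmemT]; left; rfl⟩
  -- bb T = aa S + 1 - ss S
  have hbT : bb T = aa S + 1 - ss S := by
    have hub : bb T ≤ aa S + 1 - ss S := by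
      apply bb_le_of
      intro y hy1 hy2
      rw [haT] at hy2
      rw [hmemT]
      right
      refine ⟨by omega, by omega, hIcc y (by omega) (by omega)⟩
    have h0T : 0 ∉ T := by
      rw [hmemT]; push_neg
      exact ⟨by omega, fun _ _ => h0⟩
    obtain ⟨hbT1, hbT2, hbT3⟩ := bb_spec hTne h0T
    by_contra hc
    exact hcT (hbT3 _ (by omega) (by rw [haT]; omega))
  have h0T : 0 ∉ T := by
    rw [hmemT]; push_neg
    exact ⟨by omega, fun _ _ => h0⟩
  -- branch for T
  have hbrT : ¬ (ss T ≤ aa T - bb T) := by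
    have := hTlow _ (ss_mem hTne)
    rw [haT, hbT]
    omega
  -- sums
  have hsum1 : ∑ x ∈ S.erase (ss S), x + ss S = ∑ x ∈ S, x :=
    Finset.sum_erase_add S _ hsmem
  have hcmem' : aa S + 1 - ss S ∈ S.erase (ss S) :=
    Finset.mem_erase.2 ⟨by omega, hcmem⟩
  have hsum2 : ∑ x ∈ (S.erase (ss S)).erase (aa S + 1 - ss S), x + (aa S + 1 - ss S)
      = ∑ x ∈ S.erase (ss S), x := Finset.sum_erase_add _ _ hcmem'
  have hnotmem : aa S + 1 ∉ (S.erase (ss S)).erase (aa S + 1 - ss S) := by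
    intro h
    exact htop (Finset.mem_of_mem_erase (Finset.mem_of_mem_erase h))
  have hsumT : ∑ x ∈ T, x = ∑ x ∈ S, x := by
    rw [hTdef, Finset.sum_insert hnotmem]
    omega
  -- cards
  have hcard : S.card = T.card + 1 := by
    rw [hTdef, Finset.card_insert_of_notMem hnotmem,
      Finset.card_erase_of_mem hcmem', Finset.card_erase_of_mem hsmem]
    have : 1 ≤ (S.erase (ss S)).card := Finset.card_pos.2 ⟨_, hcmem'⟩
    rw [Finset.card_erase_of_mem hsmem] at this
    omega
  -- not exceptional
  have hexcT : ¬ Exc T := by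
    rintro ⟨k, hk | hk⟩
    · have h1' : aa T = 2 * k + 1 := by rw [hk]; exact aa_Icc (by omega)
      rw [haT] at h1'
      apply hcT
      rw [hk, Finset.mem_Icc]
      omega
    · have hkne : T.Nonempty := hTne
      rw [hk] at hkne
      have hk1 : k + 1 ≤ 2 * k := by
        have := Finset.nonempty_Icc.1 hkne; omega
      have h1' : aa T = 2 * k := by rw [hk]; exact aa_Icc hk1
      rw [haT] at h1'
      apply hcT
      rw [hk, Finset.mem_Icc]
      omega
  -- inverse
  have hinv : insert (aa T - bb T) (insert (bb T) (T.erase (aa T))) = S := by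
    rw [haT, hbT]
    have e1 : T.erase (aa S + 1) = (S.erase (ss S)).erase (aa S + 1 - ss S) := by
      rw [hTdef]; exact Finset.erase_insert hnotmem
    rw [e1, Finset.insert_erase hcmem']
    have e2 : aa S + 1 - (aa S + 1 - ss S) = ss S := by omega
    rw [e2, Finset.insert_erase hsmem]
  rw [hFS]
  exact ⟨h0T, hTne, hsumT, hcard, hexcT, hbrT, hinv⟩

lemma caseB {S : Finset ℕ} (h0 : 0 ∉ S) (hne : S.Nonempty) (hexc : ¬ Exc S)
    (hbr : ¬ (ss S ≤ aa S - bb S)) :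
    (0 ∉ FF S) ∧ (FF S).Nonempty ∧ (∑ x ∈ FF S, x = ∑ x ∈ S, x) ∧
    ((FF S).card = S.card + 1) ∧ ¬ Exc (FF S) ∧
    (ss (FF S) ≤ aa (FF S) - bb (FF S)) ∧
    insert (aa (FF S) + 1) (((FF S).erase (ss (FF S))).erase (aa (FF S) + 1 - ss (FF S))) = S := by
  obtain ⟨hb, hba, hIcc⟩ := bb_spec hne h0
  have hsmem : ss S ∈ S := ss_mem hne
  have hamem : aa S ∈ S := aa_mem hne
  have h1 : ∀ x ∈ S, 1 ≤ x := fun x hx => by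
    rcases Nat.eq_zero_or_pos x with h | h
    · exact absurd (h ▸ hx) h0
    · exact h
  have hs1 : 1 ≤ ss S := h1 _ hsmem
  have hsa : ss S ≤ aa S := le_aa hsmem
  have hsb : ss S ≤ bb S + 1 := ss_le (hIcc _ (Nat.lt_succ_self _) hba)
  have hsg : aa S - bb S < ss S := by omega
  -- aa S - bb S < bb S
  have hblt : aa S - bb S < bb S := by
    by_contra hc
    -- then bb S = aa S - bb S, ss S = bb S + 1, S = Icc (ss S) (aa S), aa S = 2 * bb S
    have hb1 : aa S = 2 * bb S := by omega
    have hss : ss S = bb S + 1 := by omega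
    have hSeq : S = Finset.Icc (bb S + 1) (2 * bb S) := by
      ext x
      simp only [Finset.mem_Icc]
      constructor
      · intro hx
        have := ss_le hx; have := le_aa hx; omega
      · intro hx; exact hIcc x (by omega) (by omega)
    have hbpos : 1 ≤ bb S := by omega
    exact hexc ⟨bb S, Or.inr hSeq⟩
  have hsgS : aa S - bb S ∉ S := fun h => by have := ss_le h; omega
  have hFS : FF S = insert (aa S - bb S) (insert (bb S) (S.erase (aa S))) := by
    rw [FF, if_neg hbr]
  set T := insert (aa S - bb S) (insert (bb S) (S.erase (aa S))) with hTdef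
  have hmemT : ∀ x, x ∈ T ↔ (x = aa S - bb S ∨ x = bb S ∨ (x ≠ aa S ∧ x ∈ S)) := by
    intro x
    simp [hTdef, Finset.mem_insert, Finset.mem_erase]
  have hTne : T.Nonempty := ⟨aa S - bb S, by rw [hmemT]; left; rfl⟩
  have h0T : 0 ∉ T := by
    rw [hmemT]; push_neg
    refine ⟨by omega, by omega, fun _ => h0⟩
  -- aa T = aa S - 1
  have haT : aa T = aa S - 1 := by
    apply aa_eq_of
    · rcases Nat.lt_or_ge (bb S) (aa S - 1) with h | h
      · rw [hmemT]; right; right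
        exact ⟨by omega, hIcc _ (by omega) (by omega)⟩
      · have : bb S = aa S - 1 := by omega
        rw [hmemT]; right; left; omega
    · intro y hy
      rcases (hmemT y).1 hy with h | h | h
      · omega
      · omega
      · have := le_aa h.2; omega
  -- ss T = aa S - bb S
  have hsT : ss T = aa S - bb S := by
    apply ss_eq_of (by rw [hmemT]; left; rfl)
    intro y hy
    rcases (hmemT y).1 hy with h | h | h
    · omega
    · omega
    · have := ss_le h.2; omega
  -- bb T ≤ bb S - 1
  have hbT : bb T ≤ bb S - 1 := by
    apply bb_le_of
    intro y hy1 hy2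
    rw [haT] at hy2
    rcases Nat.eq_or_lt_of_le (Nat.succ_le_of_lt hy1) with h | h
    · rw [hmemT]; right; left; omega
    · rw [hmemT]; right; right
      exact ⟨by omega, hIcc _ (by omega) (by omega)⟩
  have hbrT : ss T ≤ aa T - bb T := by
    rw [haT, hsT]; omega
  -- sums
  have hsum1 : ∑ x ∈ S.erase (aa S), x + aa S = ∑ x ∈ S, x :=
    Finset.sum_erase_add S _ hamem
  have hbnot : bb S ∉ S.erase (aa S) := fun h => hb (Finset.mem_of_mem_erase h)
  have hsgnot : aa S - bb S ∉ insert (bb S) (S.erase (aa S)) := by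
    simp only [Finset.mem_insert]
    push_neg
    exact ⟨by omega, fun h => hsgS (Finset.mem_of_mem_erase h)⟩
  have hsumT : ∑ x ∈ T, x = ∑ x ∈ S, x := by
    rw [hTdef, Finset.sum_insert hsgnot, Finset.sum_insert hbnot]
    omega
  -- cards
  have hcard : T.card = S.card + 1 := by
    rw [hTdef, Finset.card_insert_of_notMem hsgnot, Finset.card_insert_of_notMem hbnot,
      Finset.card_erase_of_mem hamem]
    have : 1 ≤ S.card := Finset.card_pos.2 hne
    omega
  -- not exceptional
  have hexcT : ¬ Exc T := by
    rintro ⟨k, hk | hk⟩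
    · have h1' : aa T = 2 * k + 1 := by rw [hk]; exact aa_Icc (by omega)
      have h2' : ss T = k + 1 := by rw [hk]; exact ss_Icc (by omega)
      rw [haT] at h1'; rw [hsT] at h2'
      omega
    · have hkne : T.Nonempty := hTne
      rw [hk] at hkne
      have hk1 : k + 1 ≤ 2 * k := by
        have := Finset.nonempty_Icc.1 hkne; omega
      have h1' : aa T = 2 * k := by rw [hk]; exact aa_Icc hk1
      have h2' : ss T = k + 1 := by rw [hk]; exact ss_Icc hk1
      rw [haT] at h1'; rw [hsT] at h2'
      omega
  -- inverse
  have hinv : insert (aa T + 1) ((T.erase (ss T)).erase (aa T + 1 - ss T)) = S := by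
    rw [haT, hsT]
    have e0 : aa S - 1 + 1 = aa S := by omega
    rw [e0]
    have e1 : aa S - (aa S - bb S) = bb S := by omega
    rw [e1]
    have e2 : T.erase (aa S - bb S) = insert (bb S) (S.erase (aa S)) := by
      rw [hTdef]; exact Finset.erase_insert hsgnot
    rw [e2, Finset.erase_insert hbnot, Finset.insert_erase hamem]
  rw [hFS]
  exact ⟨h0T, hTne, hsumT, hcard, hexcT, hbrT, hinv⟩

lemma exc_empty : Exc (∅ : Finset ℕ) := ⟨0, Or.inr (by simp)⟩

lemma FF_spec {S : Finset ℕ} (h0 : 0 ∉ S) (hexc : ¬ Exc S) :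
    0 ∉ FF S ∧ (∑ x ∈ FF S, x = ∑ x ∈ S, x) ∧
    (S.card = (FF S).card + 1 ∨ (FF S).card = S.card + 1) ∧
    ¬ Exc (FF S) ∧ FF (FF S) = S := by
  have hne : S.Nonempty := by
    rcases S.eq_empty_or_nonempty with h | h
    · exact absurd (h ▸ exc_empty) hexc
    · exact h
  by_cases hbr : ss S ≤ aa S - bb S
  · obtain ⟨c1, c2, c3, c4, c5, c6, c7⟩ := caseA h0 hne hexc hbr
    refine ⟨c1, c3, Or.inl c4, c5, ?_⟩
    rw [FF, if_neg c6]
    exact c7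
  · obtain ⟨c1, c2, c3, c4, c5, c6, c7⟩ := caseB h0 hne hexc hbr
    refine ⟨c1, c3, Or.inr c4, c5, ?_⟩
    rw [FF, if_pos c6]
    exact c7

open scoped Classical in
lemma invol (n : ℕ) :
    ∑ S ∈ (ParS n).filter (fun S => ¬ Exc S), (-1 : ℤ) ^ S.card = 0 := by
  apply Finset.sum_involution (fun S _ => FF S)
  · intro S hS
    simp only [Finset.mem_filter] at hS
    obtain ⟨hP, hE⟩ := hS
    obtain ⟨h0, hsum⟩ := mem_ParS.1 hP
    obtain ⟨_, _, hcard, _, _⟩ := FF_spec h0 hE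
    rcases hcard with h | h <;> rw [h] <;> ring
  · intro S hS _
    simp only [Finset.mem_filter] at hS
    obtain ⟨hP, hE⟩ := hS
    obtain ⟨h0, hsum⟩ := mem_ParS.1 hP
    obtain ⟨_, _, hcard, _, _⟩ := FF_spec h0 hE
    intro hFF
    rw [hFF] at hcard
    omega
  · intro S hS
    simp only [Finset.mem_filter] at hS
    obtain ⟨hP, hE⟩ := hS
    obtain ⟨h0, hsum⟩ := mem_ParS.1 hP
    obtain ⟨h0', hsum', _, hE', _⟩ := FF_spec h0 hE
    simp only [Finset.mem_filter]
    exact ⟨mem_ParS.2 ⟨h0', hsum'.trans hsum⟩, hE'⟩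
  · intro S hS
    simp only [Finset.mem_filter] at hS
    obtain ⟨hP, hE⟩ := hS
    obtain ⟨h0, hsum⟩ := mem_ParS.1 hP
    exact (FF_spec h0 hE).2.2.2.2

lemma gauss (m : ℕ) : 2 * ∑ x ∈ Finset.Icc 1 m, x = m * (m + 1) := by
  have h : Finset.range (m + 1) = insert 0 (Finset.Icc 1 m) := by
    ext x; simp [Finset.mem_range, Finset.mem_Icc]; omega
  have h2 := Finset.sum_range_id_mul_two (m + 1)
  rw [h, Finset.sum_insert (by simp), zero_add, Nat.add_sub_cancel, mul_comm (m+1) m] at h2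
  omega

lemma icc_split (k m : ℕ) (h : k ≤ m) :
    ∑ x ∈ Finset.Icc 1 m, x = ∑ x ∈ Finset.Icc 1 k, x + ∑ x ∈ Finset.Icc (k+1) m, x := by
  rw [← Finset.sum_union]
  · congr 1
    ext x; simp [Finset.mem_Icc, Finset.mem_union]; omega
  · rw [Finset.disjoint_left]
    intro x hx hx'
    simp [Finset.mem_Icc] at hx hx'
    omega

lemma sum_pent_pos (k : ℕ) : 2 * ∑ x ∈ Finset.Icc (k+1) (2*k), x = 3*k^2 + k := by
  have h1 := gauss (2*k)
  have h2 := gauss k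
  have h3 := icc_split k (2*k) (by omega)
  have e1 : 2*k*(2*k+1) = 4*k^2 + 2*k := by ring
  have e2 : k*(k+1) = k^2 + k := by ring
  rw [e1] at h1; rw [e2] at h2
  omega

lemma sum_pent_neg (k : ℕ) : 2 * ∑ x ∈ Finset.Icc (k+1) (2*k+1), x = 3*k^2 + 5*k + 2 := by
  have h1 := gauss (2*k+1)
  have h2 := gauss k
  have h3 := icc_split k (2*k+1) (by omega)
  have e1 : (2*k+1)*(2*k+1+1) = 4*k^2 + 6*k + 2 := by ring
  have e2 : k*(k+1) = k^2 + k := by ring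
  rw [e1] at h1; rw [e2] at h2
  omega

lemma pent_inj {i j : ℤ} (h : 3*i^2 + i = 3*j^2 + j) : i = j := by
  have h2 : (i - j) * (3*(i+j)+1) = 0 := by linear_combination h
  rcases mul_eq_zero.1 h2 with h3 | h3
  · omega
  · omega

def pentSet (i : ℤ) : Finset ℕ :=
  if 0 < i then Finset.Icc (i.natAbs + 1) (2 * i.natAbs)
  else Finset.Icc i.natAbs (2 * i.natAbs - 1)

lemma pentSet_spec {i : ℤ} (hi : i ≠ 0) {n : ℕ} (h : 2 * (n : ℤ) = 3 * i ^ 2 + i) :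
    pentSet i ∈ ParS n ∧ Exc (pentSet i) ∧ (pentSet i).card = i.natAbs := by
  rcases lt_or_gt_of_ne hi with hneg | hpos
  · -- i < 0, write i = -(k+1)
    obtain ⟨k, hk⟩ : ∃ k : ℕ, i = -((k : ℤ) + 1) := by
      refine ⟨(-i).toNat - 1, ?_⟩
      have : (-i).toNat = -i := Int.toNat_of_nonneg (by omega)
      omega
    have hnatAbs : i.natAbs = k + 1 := by rw [hk]; simp; omega
    have hps : pentSet i = Finset.Icc (k + 1) (2 * k + 1) := by
      rw [pentSet, if_neg (by omega), hnatAbs]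
      have e : 2 * (k + 1) - 1 = 2 * k + 1 := by omega
      rw [e]
    have hsum : 2 * n = 3 * k ^ 2 + 5 * k + 2 := by
      have : 2 * (n : ℤ) = 3 * ((k : ℤ) + 1) ^ 2 - ((k : ℤ) + 1) := by rw [h, hk]; ring
      have h2 : 2 * (n : ℤ) = ((3 * k ^ 2 + 5 * k + 2 : ℕ) : ℤ) := by
        rw [this]; push_cast; ring
      exact_mod_cast h2
    have hsum2 := sum_pent_neg k
    refine ⟨mem_ParS.2 ⟨?_, ?_⟩, ⟨k, Or.inl hps⟩, ?_⟩
    · rw [hps]; simp [Finset.mem_Icc]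
    · rw [hps]; omega
    · rw [hps, Nat.card_Icc, hnatAbs]; omega
  · -- i > 0
    obtain ⟨k, hk⟩ : ∃ k : ℕ, i = (k : ℤ) ∧ 1 ≤ k := by
      refine ⟨i.toNat, ?_, ?_⟩
      · exact (Int.toNat_of_nonneg (by omega)).symm
      · omega
    obtain ⟨hk, hk1⟩ := hk
    have hnatAbs : i.natAbs = k := by rw [hk]; simp
    have hps : pentSet i = Finset.Icc (k + 1) (2 * k) := by
      rw [pentSet, if_pos hpos, hnatAbs]
    have hsum : 2 * n = 3 * k ^ 2 + k := by
      have h2 : 2 * (n : ℤ) = ((3 * k ^ 2 + k : ℕ) : ℤ) := by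
        rw [h, hk]; push_cast; ring
      exact_mod_cast h2
    have hsum2 := sum_pent_pos k
    refine ⟨mem_ParS.2 ⟨?_, ?_⟩, ⟨k, Or.inr hps⟩, ?_⟩
    · rw [hps]; simp [Finset.mem_Icc]
    · rw [hps]; omega
    · rw [hps, Nat.card_Icc, hnatAbs]; omega

lemma exc_pent {n : ℕ} (hn : 1 ≤ n) {S : Finset ℕ} (hP : S ∈ ParS n) (hE : Exc S) :
    ∃ i : ℤ, i ≠ 0 ∧ 2 * (n : ℤ) = 3 * i ^ 2 + i ∧ S = pentSet i := by
  obtain ⟨h0, hsum⟩ := mem_ParS.1 hP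
  obtain ⟨k, hk | hk⟩ := hE
  · refine ⟨-((k : ℤ) + 1), by omega, ?_, ?_⟩
    · have h1 := sum_pent_neg k
      rw [← hk, hsum] at h1
      have h2 : 2 * (n : ℤ) = 3 * (k : ℤ) ^ 2 + 5 * k + 2 := by exact_mod_cast h1
      rw [h2]; ring
    · rw [hk, pentSet, if_neg (by omega)]
      have : (-((k : ℤ) + 1)).natAbs = k + 1 := by
        rw [Int.natAbs_neg]
        exact_mod_cast Int.natAbs_natCast (k+1)
      rw [this]
      have e : 2 * (k + 1) - 1 = 2 * k + 1 := by omega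
      rw [e]
  · have hk1 : 1 ≤ k := by
      by_contra hc
      have : k = 0 := by omega
      subst this
      rw [hk] at hsum
      rw [show Finset.Icc 1 0 = (∅ : Finset ℕ) from rfl] at hsum
      simp at hsum
      omega
    refine ⟨(k : ℤ), by omega, ?_, ?_⟩
    · have h1 := sum_pent_pos k
      rw [← hk, hsum] at h1
      have h2 : 2 * (n : ℤ) = 3 * (k : ℤ) ^ 2 + k := by exact_mod_cast h1
      rw [h2]
    · rw [hk, pentSet, if_pos (by exact_mod_cast hk1)]
      have : ((k : ℤ)).natAbs = k := by simp
      rw [this]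

lemma sigma0_zero : sigma0 0 = 1 := by
  unfold sigma0
  rw [show Finset.Icc 1 0 = (∅ : Finset ℕ) from rfl, Finset.prod_empty]
  simp

open scoped Classical in
lemma sigma0_split (n : ℕ) :
    sigma0 n = ∑ S ∈ (ParS n).filter (fun S => Exc S), (-1 : ℤ) ^ S.card := by
  rw [sigma0_eq, ← Finset.sum_filter_add_sum_filter_not (ParS n) (fun S => Exc S), invol n,
    add_zero]


/-- Euler's pentagonal number theorem: `σ_0(n) = (-1)^i` if `n = (3i² + i)/2` for some
integer `i`, and `σ_0(n) = 0` otherwise.  (The equation `n = (3i²+i)/2` is written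
without division as `2n = 3i² + i`, and `(-1)^i` as `(-1)^{|i|}`.) -/
theorem stmt6 (n : ℕ) :
    (∀ i : ℤ, 2 * (n : ℤ) = 3 * i ^ 2 + i → sigma0 n = (-1) ^ i.natAbs) ∧
    ((¬ ∃ i : ℤ, 2 * (n : ℤ) = 3 * i ^ 2 + i) → sigma0 n = 0) := by
  classical
  constructor
  · intro i hi
    by_cases hi0 : i = 0
    · subst hi0
      have hn0 : n = 0 := by
        simp at hi
        exact_mod_cast hi
      subst hn0
      simpa using sigma0_zero
    · have hn1 : 1 ≤ n := by
        by_contra hc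
        have hn0 : n = 0 := by omega
        subst hn0
        have h0 : 3 * i ^ 2 + i = 3 * (0:ℤ) ^ 2 + 0 := by rw [← hi]; ring
        exact hi0 (pent_inj h0)
      obtain ⟨hmem, hexc, hcard⟩ := pentSet_spec hi0 hi
      have hfil : (ParS n).filter (fun S => Exc S) = {pentSet i} := by
        ext S
        simp only [Finset.mem_filter, Finset.mem_singleton]
        constructor
        · rintro ⟨hP, hE⟩
          obtain ⟨j, hj0, hj, hSj⟩ := exc_pent hn1 hP hE
          have : j = i := pent_inj (hj.symm.trans hi)
          rw [hSj, this]
        · rintro rfl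
          exact ⟨hmem, hexc⟩
      rw [sigma0_split, hfil, Finset.sum_singleton, hcard]
  · intro hno
    have hn1 : 1 ≤ n := by
      by_contra hc
      have hn0 : n = 0 := by omega
      exact hno ⟨0, by subst hn0; simp⟩
    have hfil : (ParS n).filter (fun S => Exc S) = ∅ := by
      ext S
      simp only [Finset.mem_filter, Finset.notMem_empty, iff_false, not_and]
      intro hP hE
      obtain ⟨j, hj0, hj, hSj⟩ := exc_pent hn1 hP hE
      exact absurd ⟨j, hj⟩ hno
    rw [sigma0_split, hfil, Finset.sum_empty]
end

section
/- Define σ(n) = ∑_{j=0}^{n} σ_j(n - j), where σ_j(m) is the coefficient of x^m in ∏_{k≥1, k≠j}(1 - x^k) (with σ_0 for the full product). Then σ(n) is the coefficient of x^n in ∑_{h≥0} x^h ∏_{m≥1, m≠h}(1 - x^m), and for all n ≥ 0, ∑_{i ∈ ℤ} (-1)^i ρ(n - (3i² + i)/2) = σ(n), where ρ(m) = 0 for m < 0, ρ(0) = 1, and ρ(m) is the number of divisors of m for m ≥ 1. -/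
open Finset PowerSeries

lemma prod_one_sub_X (s : Finset ℕ) :
    (∏ i ∈ s, (1 - PowerSeries.X ^ i : PowerSeries ℤ)) =
    ∑ t ∈ s.powerset, (-1)^t.card * PowerSeries.X ^ (t.sum id) := by
  have h : (∏ i ∈ s, (1 - PowerSeries.X ^ i : PowerSeries ℤ))
      = ∏ i ∈ s, ((-X ^ i) + 1 : PowerSeries ℤ) := by
    apply Finset.prod_congr rfl; intro i _; ring
  rw [h, Finset.prod_add]
  apply Finset.sum_congr rfl
  intro t _
  rw [Finset.prod_const_one, mul_one]
  have : ∏ i ∈ t, (-X ^ i : PowerSeries ℤ) = (-1)^t.card * ∏ i ∈ t, (X ^ i : PowerSeries ℤ) := by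
    rw [← Finset.prod_const (-1 : PowerSeries ℤ), ← Finset.prod_mul_distrib]
    apply Finset.prod_congr rfl; intro i _; ring
  rw [this, Finset.prod_pow_eq_pow_sum]
  rfl

lemma coeff_prod_one_sub (s : Finset ℕ) (m : ℕ) :
    PowerSeries.coeff (R := ℤ) m (∏ i ∈ s, (1 - PowerSeries.X ^ i)) =
    ∑ t ∈ s.powerset.filter (fun t => t.sum id = m), (-1)^t.card := by
  rw [prod_one_sub_X, map_sum, Finset.sum_filter]
  apply Finset.sum_congr rfl
  intro t _
  have h1 : ((-1 : PowerSeries ℤ))^t.card = PowerSeries.C (R := ℤ) ((-1)^t.card) := by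
    rw [map_pow, map_neg, map_one]
  rw [h1, PowerSeries.coeff_C_mul, PowerSeries.coeff_X_pow]
  by_cases h : t.sum id = m
  · rw [if_pos h, if_pos h.symm, mul_one]
  · rw [if_neg (fun hh => h hh.symm), if_neg h, mul_zero]

/-- every element of a finset is at most its sum -/
lemma le_sum_of_mem {T : Finset ℕ} {x : ℕ} (hx : x ∈ T) : x ≤ T.sum id :=
  Finset.single_le_sum (fun i _ => Nat.zero_le (id i)) hx

lemma filter_powerset_eq (N m : ℕ) (hm : m ≤ N) :
    ((Finset.Icc 1 N).powerset).filter (fun t => t.sum id = m) =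
    ((Finset.Icc 1 m).powerset).filter (fun t => t.sum id = m) := by
  ext T
  simp only [mem_filter, mem_powerset]
  constructor
  · rintro ⟨hsub, hsum⟩
    refine ⟨fun x hx => ?_, hsum⟩
    have h1 := hsub hx
    rw [mem_Icc] at h1 ⊢
    exact ⟨h1.1, hsum ▸ le_sum_of_mem hx⟩
  · rintro ⟨hsub, hsum⟩
    exact ⟨hsub.trans (Finset.Icc_subset_Icc_right hm), hsum⟩

lemma filter_powerset_erase_eq (N m h : ℕ) (hm : m ≤ N) :
    (((Finset.Icc 1 N).erase h).powerset).filter (fun t => t.sum id = m) =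
    (((Finset.Icc 1 m).erase h).powerset).filter (fun t => t.sum id = m) := by
  ext T
  simp only [mem_filter, mem_powerset]
  constructor
  · rintro ⟨hsub, hsum⟩
    refine ⟨fun x hx => ?_, hsum⟩
    have h1 := hsub hx
    rw [mem_erase] at h1 ⊢
    rw [mem_Icc] at h1 ⊢
    exact ⟨h1.1, ⟨h1.2.1, hsum ▸ le_sum_of_mem hx⟩⟩
  · rintro ⟨hsub, hsum⟩
    exact ⟨hsub.trans (Finset.erase_subset_erase _ (Finset.Icc_subset_Icc_right hm)), hsum⟩

/-- run length: the largest `t ≤ M` such that `Icc (M+1-t) M ⊆ T`, where `M = max T`. -/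
def runLen (T : Finset ℕ) (hT : T.Nonempty) : ℕ :=
  Nat.findGreatest (fun k => Finset.Icc (T.max' hT + 1 - k) (T.max' hT) ⊆ T) (T.max' hT)

def isExc (T : Finset ℕ) : Prop :=
  T = Finset.Icc T.card (2*T.card - 1) ∨ T = Finset.Icc (T.card + 1) (2*T.card)

instance : DecidablePred isExc := fun T => by unfold isExc; infer_instance

section Run
variable {T : Finset ℕ} (hT : T.Nonempty)

lemma runLen_le : runLen T hT ≤ T.max' hT := Nat.findGreatest_le _

lemma P_one : Finset.Icc (T.max' hT + 1 - 1) (T.max' hT) ⊆ T := by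
  intro x hx
  rw [mem_Icc] at hx
  have : x = T.max' hT := by omega
  exact this ▸ T.max'_mem hT

lemma one_le_runLen (h1 : 1 ≤ T.max' hT) : 1 ≤ runLen T hT :=
  Nat.le_findGreatest h1 (P_one hT)

lemma run_subset (h1 : 1 ≤ T.max' hT) :
    Finset.Icc (T.max' hT + 1 - runLen T hT) (T.max' hT) ⊆ T := by
  unfold runLen
  exact Nat.findGreatest_spec (P := fun k => Finset.Icc (T.max' hT + 1 - k) (T.max' hT) ⊆ T)
    (m := 1) h1 (P_one hT)

lemma top_sub_runLen_not_mem (h0 : 0 ∉ T) (h1 : 1 ≤ T.max' hT) :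
    T.max' hT - runLen T hT ∉ T := by
  by_cases htM : runLen T hT = T.max' hT
  · rw [htM]; simpa using h0
  · have hlt : runLen T hT < T.max' hT := lt_of_le_of_ne (runLen_le hT) htM
    have hng := Nat.findGreatest_is_greatest
      (P := fun k => Finset.Icc (T.max' hT + 1 - k) (T.max' hT) ⊆ T)
      (k := runLen T hT + 1) (n := T.max' hT) (by exact lt_add_one _) (by omega)
    intro hmem
    apply hng
    intro x hx
    rw [mem_Icc] at hx
    by_cases hx2 : x = T.max' hT - runLen T hT
    · exact hx2 ▸ hmem
    · exact run_subset hT h1 (by rw [mem_Icc]; omega)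

/-- if runLen = r is witnessed -/
lemma runLen_eq_of (r : ℕ) (hr1 : 1 ≤ r) (hrM : r ≤ T.max' hT)
    (hP : Finset.Icc (T.max' hT + 1 - r) (T.max' hT) ⊆ T)
    (hnot : T.max' hT - r ∉ T) : runLen T hT = r := by
  have hge : r ≤ runLen T hT := Nat.le_findGreatest hrM hP
  rcases lt_or_eq_of_le hge with hlt | heq
  · exfalso
    have h1 : 1 ≤ T.max' hT := le_trans hr1 hrM
    apply hnot
    apply run_subset hT h1
    rw [mem_Icc]
    have := runLen_le hT
    omega
  · exact heq.symm

/-- if the min is inside the run, T is an interval -/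
lemma consec_of_min_in_run (h1 : 1 ≤ T.max' hT)
    (hrun : T.max' hT + 1 - runLen T hT ≤ T.min' hT) :
    T = Finset.Icc (T.min' hT) (T.max' hT) := by
  apply Finset.Subset.antisymm
  · intro x hx; rw [mem_Icc]; exact ⟨T.min'_le x hx, T.le_max' x hx⟩
  · intro x hx
    rw [mem_Icc] at hx
    apply run_subset hT h1
    rw [mem_Icc]
    exact ⟨by omega, hx.2⟩
end Run

lemma le_sum_of_mem' {T : Finset ℕ} {x : ℕ} (hx : x ∈ T) : x ≤ T.sum id :=
  Finset.single_le_sum (fun i _ => Nat.zero_le (id i)) hx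

lemma runLen_le_card {T : Finset ℕ} (hT : T.Nonempty) (h1 : 1 ≤ T.max' hT) :
    runLen T hT ≤ T.card := by
  have h := Finset.card_le_card (run_subset hT h1)
  rw [Nat.card_Icc] at h
  have := runLen_le hT
  omega

lemma Icc_min' {a b : ℕ} (h : a ≤ b) (hne : (Finset.Icc a b).Nonempty) :
    (Finset.Icc a b).min' hne = a :=
  le_antisymm (Finset.min'_le _ a (by rw [mem_Icc]; omega))
    (Finset.le_min' _ _ _ (fun y hy => (mem_Icc.mp hy).1))

lemma Icc_max' {a b : ℕ} (h : a ≤ b) (hne : (Finset.Icc a b).Nonempty) :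
    (Finset.Icc a b).max' hne = b :=
  le_antisymm (Finset.max'_le _ _ _ (fun y hy => (mem_Icc.mp hy).2))
    (Finset.le_max' _ b (by rw [mem_Icc]; omega))

/-- for an interval with positive left end, runLen = card -/
lemma runLen_Icc {a b : ℕ} (h : a ≤ b) (ha : 1 ≤ a) (hne : (Finset.Icc a b).Nonempty) :
    runLen (Finset.Icc a b) hne = b + 1 - a := by
  have hmax := Icc_max' h hne
  have hb1 : 1 ≤ (Finset.Icc a b).max' hne := by omega
  have hge : b + 1 - a ≤ runLen (Finset.Icc a b) hne := by
    apply Nat.le_findGreatest (by omega)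
    intro x hx
    rw [hmax] at hx
    rw [mem_Icc] at hx ⊢
    omega
  have hle := runLen_le_card hne hb1
  rw [Nat.card_Icc] at hle
  omega

lemma min'_congr {T S : Finset ℕ} (h : T = S) (hT : T.Nonempty) (hS : S.Nonempty) :
    T.min' hT = S.min' hS := by subst h; rfl

lemma max'_congr {T S : Finset ℕ} (h : T = S) (hT : T.Nonempty) (hS : S.Nonempty) :
    T.max' hT = S.max' hS := by subst h; rfl

lemma runLen_congr {T S : Finset ℕ} (h : T = S) (hT : T.Nonempty) (hS : S.Nonempty) :
    runLen T hT = runLen S hS := by subst h; rfl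

def phi (T : Finset ℕ) : Finset ℕ :=
  if hT : T.Nonempty then
    if T.min' hT ≤ runLen T hT then
      insert (T.max' hT + 1) ((T.erase (T.min' hT)).erase (T.max' hT + 1 - T.min' hT))
    else
      insert (runLen T hT) (insert (T.max' hT - runLen T hT) (T.erase (T.max' hT)))
  else ∅

lemma phi_step (m : ℕ) (T : Finset ℕ) (hsub : ∀ x ∈ T, 1 ≤ x) (hsum : T.sum id = m)
    (hexc : ¬ isExc T) (hT : T.Nonempty) :
    (∀ x ∈ phi T, 1 ≤ x) ∧ (phi T).sum id = m ∧ ¬ isExc (phi T) ∧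
    (phi T).Nonempty ∧ phi (phi T) = T ∧
    (T.card = (phi T).card + 1 ∨ (phi T).card = T.card + 1) := by
  classical
  set M := T.max' hT with hM
  set s := T.min' hT with hs
  set t := runLen T hT with ht
  have hMin : M ∈ T := T.max'_mem hT
  have hsin : s ∈ T := T.min'_mem hT
  have h0 : (0:ℕ) ∉ T := fun h => by have := hsub 0 h; omega
  have h1M : 1 ≤ M := hsub M hMin
  have hs1 : 1 ≤ s := hsub s hsin
  have hsM : s ≤ M := T.min'_le M hMin
  have ht1 : 1 ≤ t := one_le_runLen hT h1M
  have htM : t ≤ M := runLen_le hT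
  have hrun : Finset.Icc (M + 1 - t) M ⊆ T := run_subset hT h1M
  have hnotrun : M - t ∉ T := top_sub_runLen_not_mem hT h0 h1M
  have htpos : M + 1 - t ∈ T := hrun (by rw [mem_Icc]; omega)
  have hsMt : s ≤ M + 1 - t := T.min'_le _ htpos
  have hcardrun : t ≤ T.card := runLen_le_card hT h1M
  have hmM : M ≤ m := hsum ▸ le_sum_of_mem' hMin
  by_cases hcase : s ≤ t
  · -- Case A
    have h2s : 2 * s ≤ M := by
      by_contra hcon
      push_neg at hcon
      have hconsec : T = Finset.Icc s M := consec_of_min_in_run hT h1M (by omega)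
      have hcard : T.card = M + 1 - s := by rw [hconsec, Nat.card_Icc]
      apply hexc
      left
      have hseq : T.card = s := by omega
      rw [hseq, hconsec]
      congr 1
      omega
    have hb : M + 1 - s ∈ T := hrun (by rw [mem_Icc]; omega)
    have hbne : M + 1 - s ≠ s := by omega
    have hbe : M + 1 - s ∈ T.erase s := Finset.mem_erase.mpr ⟨hbne, hb⟩
    set X := (T.erase s).erase (M + 1 - s) with hX
    have hMX : M + 1 ∉ X := by
      intro h
      have := hsub (M+1) (Finset.mem_of_mem_erase (Finset.mem_of_mem_erase h))
      have : M + 1 ≤ M := T.le_max' _ (Finset.mem_of_mem_erase (Finset.mem_of_mem_erase h))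
      omega
    have hphi : phi T = insert (M+1) X := by
      rw [phi, dif_pos hT, if_pos hcase]
    set T' := insert (M+1) X with hT'
    have hT'ne : T'.Nonempty := ⟨M+1, Finset.mem_insert_self _ _⟩
    -- membership facts
    have hmemT' : ∀ x ∈ T', x = M + 1 ∨ (x ∈ T ∧ x ≠ s ∧ x ≠ M + 1 - s) := by
      intro x hx
      rcases Finset.mem_insert.mp hx with h | h
      · left; exact h
      · right
        have h2 := Finset.mem_of_mem_erase h
        exact ⟨Finset.mem_of_mem_erase h2, Finset.ne_of_mem_erase h2, Finset.ne_of_mem_erase h⟩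
    have hmem1 : ∀ x ∈ T', 1 ≤ x := by
      intro x hx
      rcases hmemT' x hx with h | h
      · omega
      · exact hsub x h.1
    -- sum
    have hsumX : X.sum id + (M + 1 - s) = (T.erase s).sum id :=
      Finset.sum_erase_add _ _ hbe
    have hsumE : (T.erase s).sum id + s = T.sum id := Finset.sum_erase_add _ _ hsin
    have hsum' : T'.sum id = m := by
      rw [hT', Finset.sum_insert hMX]
      simp only [id] at hsumX hsumE hsum ⊢
      omega
    -- card
    have hcX : X.card + 1 = (T.erase s).card := Finset.card_erase_add_one hbe
    have hcE : (T.erase s).card + 1 = T.card := Finset.card_erase_add_one hsin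
    have hcard' : T.card = T'.card + 1 := by
      rw [hT', Finset.card_insert_of_notMem hMX]
      omega
    -- max of T'
    have hmax' : T'.max' hT'ne = M + 1 := by
      apply le_antisymm
      · apply Finset.max'_le
        intro y hy
        rcases hmemT' y hy with h | h
        · omega
        · have := T.le_max' y h.1; omega
      · exact Finset.le_max' _ _ (Finset.mem_insert_self _ _)
    -- min of T'
    have hmin' : s < T'.min' hT'ne := by
      have hmm := T'.min'_mem hT'ne
      rcases hmemT' _ hmm with h | h
      · omega
      · have h3 := hsub _ h.1
        have h4 : s ≤ T'.min' hT'ne := T.min'_le _ h.1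
        rcases h with ⟨_, hne, _⟩
        omega
    -- runLen of T'
    have hrun' : runLen T' hT'ne = s := by
      apply runLen_eq_of hT'ne s hs1 (by omega)
      · intro x hx
        rw [mem_Icc, hmax'] at hx
        by_cases hxM : x = M + 1
        · exact hxM ▸ Finset.mem_insert_self _ _
        · apply Finset.mem_insert_of_mem
          rw [hX]
          apply Finset.mem_erase.mpr
          refine ⟨by omega, Finset.mem_erase.mpr ⟨by omega, ?_⟩⟩
          apply hrun
          rw [mem_Icc]
          omega
      · rw [hmax']
        intro hcon
        rcases hmemT' _ hcon with h | h
        · omega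
        · exact h.2.2 (by omega)
    -- phi of T' : case B
    have hphi2 : phi T' = T := by
      rw [phi, dif_pos hT'ne, if_neg (by rw [hrun']; omega)]
      rw [hrun', hmax']
      have e1 : T'.erase (M+1) = X := by
        rw [hT']
        exact Finset.erase_insert hMX
      rw [e1]
      have e2 : insert (M + 1 - s) X = T.erase s := by
        rw [hX]
        exact Finset.insert_erase hbe
      rw [e2, Finset.insert_erase hsin]
    -- non exceptional
    have hexc' : ¬ isExc T' := by
      intro hcon
      have hcardpos : 1 ≤ T'.card := Finset.card_pos.mpr hT'ne
      rcases hcon with hcon | hcon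
      · -- T' = Icc c' (2c'-1)
        have hne2 : (Finset.Icc T'.card (2*T'.card - 1)).Nonempty := hcon ▸ hT'ne
        have hab : T'.card ≤ 2*T'.card - 1 := by
          rcases hne2 with ⟨y, hy⟩; rw [mem_Icc] at hy; omega
        have hmin2 : T'.min' hT'ne = T'.card :=
          (min'_congr hcon hT'ne hne2).trans (Icc_min' hab hne2)
        have hrun2 : runLen T' hT'ne = (2*T'.card - 1) + 1 - T'.card :=
          (runLen_congr hcon hT'ne hne2).trans (runLen_Icc hab (by omega) hne2)
        rw [hrun'] at hrun2
        rw [hmin2] at hmin'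
        omega
      · have hne2 : (Finset.Icc (T'.card + 1) (2*T'.card)).Nonempty := hcon ▸ hT'ne
        have hab : T'.card + 1 ≤ 2*T'.card := by
          rcases hne2 with ⟨y, hy⟩; rw [mem_Icc] at hy; omega
        have hmin2 : T'.min' hT'ne = T'.card + 1 :=
          (min'_congr hcon hT'ne hne2).trans (Icc_min' hab hne2)
        have hmax2 : T'.max' hT'ne = 2*T'.card :=
          (max'_congr hcon hT'ne hne2).trans (Icc_max' hab hne2)
        have hrun2 : runLen T' hT'ne = 2*T'.card + 1 - (T'.card + 1) :=
          (runLen_congr hcon hT'ne hne2).trans (runLen_Icc hab (by omega) hne2)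
        rw [hrun'] at hrun2
        rw [hmax'] at hmax2
        -- s = T'.card, M+1 = 2s → M = 2s-1 contradicts 2s ≤ M
        omega
    rw [hphi]
    exact ⟨hmem1, hsum', hexc', hT'ne, hphi2, Or.inl hcard'⟩
  · -- Case B
    push_neg at hcase
    have hM2t : M ≠ 2 * t := by
      intro hcon
      have hs2 : s = t + 1 := by omega
      have hconsec : T = Finset.Icc s M := consec_of_min_in_run hT h1M (by omega)
      apply hexc
      right
      have hcd : T.card = t := by rw [hconsec, Nat.card_Icc]; omega
      rw [hcd, hconsec]
      congr 1 <;> omega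
    have htMt : t < M - t := by omega
    have hnotT : t ∉ T := fun h => by have := T.min'_le t h; omega
    set Y := insert (M - t) (T.erase M) with hY
    have hMtE : M - t ∉ T.erase M := fun h => hnotrun (Finset.mem_of_mem_erase h)
    have htY : t ∉ Y := by
      intro h
      rcases Finset.mem_insert.mp h with h | h
      · omega
      · exact hnotT (Finset.mem_of_mem_erase h)
    have hphi : phi T = insert t Y := by
      rw [phi, dif_pos hT, if_neg (by omega)]
    set T' := insert t Y with hT'
    have hT'ne : T'.Nonempty := ⟨t, Finset.mem_insert_self _ _⟩
    have hmemT' : ∀ x ∈ T', x = t ∨ x = M - t ∨ (x ∈ T ∧ x ≠ M) := by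
      intro x hx
      rcases Finset.mem_insert.mp hx with h | h
      · left; exact h
      · rcases Finset.mem_insert.mp h with h | h
        · right; left; exact h
        · right; right; exact ⟨Finset.mem_of_mem_erase h, Finset.ne_of_mem_erase h⟩
    have hmem1 : ∀ x ∈ T', 1 ≤ x := by
      intro x hx
      rcases hmemT' x hx with h | h | h
      · omega
      · omega
      · exact hsub x h.1
    have hsumE : (T.erase M).sum id + M = T.sum id := Finset.sum_erase_add _ _ hMin
    have hsum' : T'.sum id = m := by
      rw [hT', Finset.sum_insert htY, hY, Finset.sum_insert hMtE]
      simp only [id] at hsumE hsum ⊢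
      omega
    have hcT : 1 ≤ T.card := Finset.card_pos.mpr hT
    have hcE : (T.erase M).card + 1 = T.card := Finset.card_erase_add_one hMin
    have hcard' : T'.card = T.card + 1 := by
      rw [hT', Finset.card_insert_of_notMem htY, hY, Finset.card_insert_of_notMem hMtE]
      omega
    have hM1mem : M - 1 ∈ T' := by
      by_cases h : t = 1
      · apply Finset.mem_insert_of_mem
        rw [hY]
        have : M - t = M - 1 := by omega
        rw [← this]
        exact Finset.mem_insert_self _ _
      · apply Finset.mem_insert_of_mem
        apply Finset.mem_insert_of_mem
        apply Finset.mem_erase.mpr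
        refine ⟨by omega, hrun ?_⟩
        rw [mem_Icc]
        omega
    have hmax' : T'.max' hT'ne = M - 1 := by
      apply le_antisymm
      · apply Finset.max'_le
        intro y hy
        rcases hmemT' y hy with h | h | h
        · omega
        · omega
        · have := T.le_max' y h.1; omega
      · exact Finset.le_max' _ _ hM1mem
    have hmin' : T'.min' hT'ne = t := by
      apply le_antisymm
      · exact Finset.min'_le _ _ (Finset.mem_insert_self _ _)
      · apply Finset.le_min'
        intro y hy
        rcases hmemT' y hy with h | h | h
        · omega
        · omega
        · have := T.min'_le y h.1; omega
    have hrun'ge : t ≤ runLen T' hT'ne := by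
      apply Nat.le_findGreatest (by omega)
      intro x hx
      rw [mem_Icc, hmax'] at hx
      by_cases hxt : x = M - t
      · apply Finset.mem_insert_of_mem
        rw [hY, hxt]
        exact Finset.mem_insert_self _ _
      · apply Finset.mem_insert_of_mem
        apply Finset.mem_insert_of_mem
        apply Finset.mem_erase.mpr
        refine ⟨by omega, hrun ?_⟩
        rw [mem_Icc]
        omega
    have hphi2 : phi T' = T := by
      rw [phi, dif_pos hT'ne, if_pos (by omega)]
      rw [hmax', hmin']
      have hM11 : M - 1 + 1 = M := by omega
      rw [hM11]
      have e1 : T'.erase t = Y := by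
        rw [hT']
        exact Finset.erase_insert htY
      rw [e1, hY, Finset.erase_insert hMtE, Finset.insert_erase hMin]
    have hexc' : ¬ isExc T' := by
      intro hcon
      have hcardpos : 1 ≤ T'.card := Finset.card_pos.mpr hT'ne
      rcases hcon with hcon | hcon
      · have hne2 : (Finset.Icc T'.card (2*T'.card - 1)).Nonempty := hcon ▸ hT'ne
        have hab : T'.card ≤ 2*T'.card - 1 := by
          rcases hne2 with ⟨y, hy⟩; rw [mem_Icc] at hy; omega
        have hmin2 : T'.min' hT'ne = T'.card :=
          (min'_congr hcon hT'ne hne2).trans (Icc_min' hab hne2)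
        have hmax2 : T'.max' hT'ne = 2*T'.card - 1 :=
          (max'_congr hcon hT'ne hne2).trans (Icc_max' hab hne2)
        rw [hmin'] at hmin2
        rw [hmax'] at hmax2
        omega
      · have hne2 : (Finset.Icc (T'.card + 1) (2*T'.card)).Nonempty := hcon ▸ hT'ne
        have hab : T'.card + 1 ≤ 2*T'.card := by
          rcases hne2 with ⟨y, hy⟩; rw [mem_Icc] at hy; omega
        have hmin2 : T'.min' hT'ne = T'.card + 1 :=
          (min'_congr hcon hT'ne hne2).trans (Icc_min' hab hne2)
        have hmax2 : T'.max' hT'ne = 2*T'.card :=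
          (max'_congr hcon hT'ne hne2).trans (Icc_max' hab hne2)
        rw [hmin'] at hmin2
        rw [hmax'] at hmax2
        omega
    rw [hphi]
    exact ⟨hmem1, hsum', hexc', hT'ne, hphi2, Or.inr hcard'⟩

lemma sum_Icc_id_mul_two (a b : ℕ) : (∑ x ∈ Finset.Icc a b, x) * 2 = (a+b) * (b+1-a) := by
  rcases le_or_gt a (b+1) with h | h
  · obtain ⟨k, hk⟩ : ∃ k, b + 1 = a + k := ⟨b+1-a, by omega⟩
    have h1 : Finset.Icc a b = Finset.Ico a (a+k) := by
      rw [← Finset.Ico_add_one_right_eq_Icc]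
      exact congrArg _ (by omega)
    rw [h1, Finset.sum_Ico_eq_sum_range]
    have h2 : a + k - a = k := by omega
    rw [h2]
    have hs : ∑ i ∈ Finset.range k, (a+i) = k*a + ∑ i ∈ Finset.range k, i := by
      rw [Finset.sum_add_distrib, Finset.sum_const, smul_eq_mul, Finset.card_range]
    rw [hs, add_mul, Finset.sum_range_id_mul_two]
    have h3 : b + 1 - a = k := by omega
    rw [h3]
    rcases k with _ | j
    · simp
    · have h4 : b = a + j := by omega
      rw [h4]
      have h5 : (j+1) - 1 = j := by omega
      rw [h5]
      ring
  · have h1 : Finset.Icc a b = ∅ := by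
      apply Finset.Icc_eq_empty
      omega
    rw [h1]
    have : b + 1 - a = 0 := by omega
    rw [this]
    simp

lemma card_le_sum_id {T : Finset ℕ} (h : ∀ x ∈ T, 1 ≤ x) : T.card ≤ T.sum id := by
  rw [Finset.card_eq_sum_ones]
  exact Finset.sum_le_sum h

lemma empty_isExc : isExc (∅ : Finset ℕ) := by
  right
  simp

theorem sum_nonexc (m : ℕ) :
    ∑ T ∈ ((((Finset.Icc 1 m).powerset).filter (fun t => t.sum id = m)).filter
      (fun T => ¬ isExc T)), (-1:ℤ)^T.card = 0 := by
  classical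
  apply Finset.sum_involution (fun T _ => phi T)
  · -- f a + f (phi a) = 0
    intro T hmem
    rw [Finset.mem_filter, Finset.mem_filter, Finset.mem_powerset] at hmem
    obtain ⟨⟨hsub, hsum⟩, hexc⟩ := hmem
    have hT : T.Nonempty := by
      rcases Finset.eq_empty_or_nonempty T with h | h
      · exact absurd (h ▸ empty_isExc) hexc
      · exact h
    obtain ⟨_, _, _, _, _, hcard⟩ := phi_step m T
      (fun x hx => (Finset.mem_Icc.mp (hsub hx)).1) hsum hexc hT
    rcases hcard with h | h
    · rw [h, pow_succ]; ring
    · rw [h, pow_succ]; ring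
  · -- g a ≠ a
    intro T hmem _
    rw [Finset.mem_filter, Finset.mem_filter, Finset.mem_powerset] at hmem
    obtain ⟨⟨hsub, hsum⟩, hexc⟩ := hmem
    have hT : T.Nonempty := by
      rcases Finset.eq_empty_or_nonempty T with h | h
      · exact absurd (h ▸ empty_isExc) hexc
      · exact h
    obtain ⟨_, _, _, _, _, hcard⟩ := phi_step m T
      (fun x hx => (Finset.mem_Icc.mp (hsub hx)).1) hsum hexc hT
    intro hcon
    rw [hcon] at hcard
    omega
  · -- g a ∈ s
    intro T hmem
    rw [Finset.mem_filter, Finset.mem_filter, Finset.mem_powerset] at hmem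
    obtain ⟨⟨hsub, hsum⟩, hexc⟩ := hmem
    have hT : T.Nonempty := by
      rcases Finset.eq_empty_or_nonempty T with h | h
      · exact absurd (h ▸ empty_isExc) hexc
      · exact h
    obtain ⟨hmem1, hsum', hexc', _, _, _⟩ := phi_step m T
      (fun x hx => (Finset.mem_Icc.mp (hsub hx)).1) hsum hexc hT
    rw [Finset.mem_filter, Finset.mem_filter, Finset.mem_powerset]
    refine ⟨⟨?_, hsum'⟩, hexc'⟩
    intro x hx
    rw [Finset.mem_Icc]
    exact ⟨hmem1 x hx, hsum' ▸ le_sum_of_mem' hx⟩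
  · -- involution
    intro T hmem
    rw [Finset.mem_filter, Finset.mem_filter, Finset.mem_powerset] at hmem
    obtain ⟨⟨hsub, hsum⟩, hexc⟩ := hmem
    have hT : T.Nonempty := by
      rcases Finset.eq_empty_or_nonempty T with h | h
      · exact absurd (h ▸ empty_isExc) hexc
      · exact h
    exact (phi_step m T (fun x hx => (Finset.mem_Icc.mp (hsub hx)).1) hsum hexc hT).2.2.2.2.1

lemma pent_two_mul (i : ℤ) : 2 * ((3*i^2+i)/2) = 3*i^2+i := by
  have he : Even (3*i^2 + i) := by
    have h := Int.even_mul_succ_self i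
    have h2 : 3*i^2 + i = i*(i+1) + 2*i^2 := by ring
    rw [h2]
    exact h.add ⟨i^2, by ring⟩
  obtain ⟨r, hr⟩ := he
  omega

def iOf (T : Finset ℕ) : ℤ :=
  if T = Finset.Icc (T.card+1) (2*T.card) then (T.card : ℤ) else -(T.card : ℤ)

def TOf (i : ℤ) : Finset ℕ :=
  if i < 0 then Finset.Icc i.natAbs (2*i.natAbs - 1)
  else Finset.Icc (i.natAbs+1) (2*i.natAbs)

lemma natAbs_iOf (T : Finset ℕ) : (iOf T).natAbs = T.card := by
  rw [iOf]
  split <;> simp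

lemma card_type1 {T : Finset ℕ} (h1 : T = Finset.Icc T.card (2*T.card - 1)) :
    1 ≤ T.card := by
  have hcc : T.card = 2*T.card - 1 + 1 - T.card := by
    conv_lhs => rw [h1, Nat.card_Icc]
  omega

lemma cond_type1 {T : Finset ℕ} (h1 : T = Finset.Icc T.card (2*T.card - 1)) :
    ¬ (T = Finset.Icc (T.card+1) (2*T.card)) := by
  have hc1 := card_type1 h1
  intro hcon
  have hm : T.card ∈ Finset.Icc T.card (2*T.card - 1) := by rw [Finset.mem_Icc]; omega
  rw [← h1] at hm
  have h3 := (Finset.ext_iff.mp hcon T.card).mp hm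
  rw [Finset.mem_Icc] at h3
  omega

set_option maxHeartbeats 1000000 in
lemma franklin (m N : ℕ) (hmN : m ≤ N) :
    (∑ T ∈ ((Finset.Icc 1 m).powerset).filter (fun t => t.sum id = m), (-1:ℤ)^T.card)
    = ∑ i ∈ Finset.Icc (-(N:ℤ)-1) ((N:ℤ)+1),
        if (3*i^2+i)/2 = (m:ℤ) then (-1:ℤ)^i.natAbs else 0 := by
  classical
  rw [← Finset.sum_filter_add_sum_filter_not
    (((Finset.Icc 1 m).powerset).filter (fun t => t.sum id = m)) (fun T => isExc T),
    sum_nonexc m, add_zero, ← Finset.sum_filter]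
  apply Finset.sum_bij' (fun T _ => iOf T) (fun i _ => TOf i)
  · -- maps into
    intro T hT
    rw [Finset.mem_filter, Finset.mem_filter, Finset.mem_powerset] at hT
    obtain ⟨⟨hsub, hsum⟩, hexc⟩ := hT
    have hone : ∀ x ∈ T, 1 ≤ x := fun x hx => (Finset.mem_Icc.mp (hsub hx)).1
    have hcm : T.card ≤ m := by rw [← hsum]; exact card_le_sum_id hone
    rw [Finset.mem_filter, Finset.mem_Icc]
    have hsx : (∑ x ∈ T, x) = m := by simpa using hsum
    rcases hexc with h1 | h2
    · -- type 1 : T = Icc c (2c-1), iOf T = -c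
      have hc1 := card_type1 h1
      have hsum2 : m * 2 = (T.card + (2*T.card - 1)) * (2*T.card - 1 + 1 - T.card) := by
        rw [← sum_Icc_id_mul_two, ← h1, hsx]
      have hsum3 : m * 2 = (3*T.card - 1) * T.card := by
        rw [hsum2]
        congr 1 <;> omega
      have h2m : 3*(-(T.card:ℤ))^2 + (-(T.card:ℤ)) = 2*(m:ℤ) := by
        have hcast : ((m * 2 : ℕ) : ℤ) = (((3*T.card - 1) * T.card : ℕ) : ℤ) :=
          congrArg _ hsum3
        push_cast [Nat.cast_sub (by omega : 1 ≤ 3*T.card)] at hcast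
        nlinarith [hcast]
      rw [iOf, if_neg (cond_type1 h1)]
      refine ⟨⟨by push_cast; omega, by push_cast; omega⟩, ?_⟩
      rw [show 3*(-(T.card:ℤ))^2 + (-(T.card:ℤ)) = 3*(-(T.card:ℤ))^2 + -(T.card:ℤ) from rfl] at h2m
      rw [h2m, Int.mul_ediv_cancel_left _ two_ne_zero]
    · -- type 2 : T = Icc (c+1) (2c), iOf T = c
      rw [iOf, if_pos h2]
      refine ⟨⟨by push_cast; omega, by push_cast; omega⟩, ?_⟩
      have hsum2 : m * 2 = ((T.card+1) + 2*T.card) * (2*T.card + 1 - (T.card+1)) := by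
        rw [← sum_Icc_id_mul_two, ← h2, hsx]
      have hsum3 : m * 2 = (3*T.card + 1) * T.card := by
        rw [hsum2]
        congr 1 <;> omega
      have h2m : 3*((T.card:ℤ))^2 + ((T.card:ℤ)) = 2*(m:ℤ) := by
        have hcast : ((m * 2 : ℕ) : ℤ) = (((3*T.card + 1) * T.card : ℕ) : ℤ) :=
          congrArg _ hsum3
        push_cast at hcast
        nlinarith [hcast]
      rw [h2m, Int.mul_ediv_cancel_left _ two_ne_zero]
  · -- reverse maps into
    intro i hi
    rw [Finset.mem_filter, Finset.mem_Icc] at hi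
    obtain ⟨⟨hlo, hhi⟩, hcond⟩ := hi
    have h2m : 3*i^2 + i = 2*(m:ℤ) := by rw [← pent_two_mul i, hcond]
    rw [Finset.mem_filter, Finset.mem_filter, Finset.mem_powerset]
    rcases lt_or_ge i 0 with hneg | hpos
    · set k := i.natAbs with hk
      have hik : i = -(k:ℤ) := by omega
      have hk1 : 1 ≤ k := by omega
      have hzz : 2*(m:ℤ) = 3*(k:ℤ)^2 - (k:ℤ) := by
        rw [hik] at h2m; nlinarith [h2m]
      have hS2 : (Finset.Icc k (2*k-1)).sum id * 2 = m * 2 := by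
        rw [show (Finset.Icc k (2*k-1)).sum id = ∑ x ∈ Finset.Icc k (2*k-1), x from rfl,
          sum_Icc_id_mul_two]
        have e1 : (k + (2*k-1)) * (2*k-1+1-k) = (3*k-1)*k := by
          congr 1 <;> omega
        rw [e1]
        have hcast : (((3*k-1)*k : ℕ) : ℤ) = ((m*2 : ℕ) : ℤ) := by
          push_cast [Nat.cast_sub (by omega : 1 ≤ 3*k)]
          nlinarith [hzz]
        exact_mod_cast hcast
      have hsumT : (Finset.Icc k (2*k-1)).sum id = m := by omega
      have hcard : (Finset.Icc k (2*k-1)).card = k := by rw [Nat.card_Icc]; omega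
      have hbound : 2*k - 1 ≤ m := by
        have : (2*(2*k - 1) : ℤ) ≤ 2*(m:ℤ) := by
          rw [hzz]
          push_cast [Nat.cast_sub (by omega : 1 ≤ 2*k)]
          nlinarith [hk1, sq_nonneg ((k:ℤ) - 1)]
        omega
      rw [TOf, if_pos hneg, ← hk]
      refine ⟨⟨?_, hsumT⟩, ?_⟩
      · intro x hx
        rw [Finset.mem_Icc] at hx ⊢
        omega
      · left
        rw [hcard]
    · set k := i.natAbs with hk
      have hik : i = (k:ℤ) := by omega
      have hzz : 2*(m:ℤ) = 3*(k:ℤ)^2 + (k:ℤ) := by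
        rw [hik] at h2m; nlinarith [h2m]
      have hS2 : (Finset.Icc (k+1) (2*k)).sum id * 2 = m * 2 := by
        rw [show (Finset.Icc (k+1) (2*k)).sum id = ∑ x ∈ Finset.Icc (k+1) (2*k), x from rfl,
          sum_Icc_id_mul_two]
        have e1 : ((k+1) + 2*k) * (2*k+1-(k+1)) = (3*k+1)*k := by
          congr 1 <;> omega
        rw [e1]
        have hcast : (((3*k+1)*k : ℕ) : ℤ) = ((m*2 : ℕ) : ℤ) := by
          push_cast
          nlinarith [hzz]
        exact_mod_cast hcast
      have hsumT : (Finset.Icc (k+1) (2*k)).sum id = m := by omega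
      have hcard : (Finset.Icc (k+1) (2*k)).card = k := by rw [Nat.card_Icc]; omega
      have hbound : 2*k ≤ m := by
        have : (2*(2*k) : ℤ) ≤ 2*(m:ℤ) := by
          rw [hzz]
          push_cast
          nlinarith [sq_nonneg ((k:ℤ) - 1), sq_nonneg (k:ℤ)]
        omega
      rw [TOf, if_neg (by omega), ← hk]
      refine ⟨⟨?_, hsumT⟩, ?_⟩
      · intro x hx
        rw [Finset.mem_Icc] at hx ⊢
        omega
      · right
        rw [hcard]
  · -- left inverse
    intro T hT
    rw [Finset.mem_filter, Finset.mem_filter, Finset.mem_powerset] at hT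
    obtain ⟨⟨hsub, hsum⟩, hexc⟩ := hT
    rcases hexc with h1 | h2
    · have hc1 := card_type1 h1
      rw [iOf, if_neg (cond_type1 h1), TOf, if_pos (by push_cast; omega)]
      have : (-(T.card:ℤ)).natAbs = T.card := by omega
      rw [this, ← h1]
    · rw [iOf, if_pos h2, TOf, if_neg (by push_cast; omega)]
      have : ((T.card:ℤ)).natAbs = T.card := by omega
      rw [this, ← h2]
  · -- right inverse
    intro i hi
    rw [Finset.mem_filter, Finset.mem_Icc] at hi
    obtain ⟨⟨hlo, hhi⟩, hcond⟩ := hi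
    rcases lt_or_ge i 0 with hneg | hpos
    · set k := i.natAbs with hk
      have hk1 : 1 ≤ k := by omega
      rw [TOf, if_pos hneg, ← hk]
      have hcard : (Finset.Icc k (2*k-1)).card = k := by rw [Nat.card_Icc]; omega
      have hcnd : ¬ (Finset.Icc k (2*k-1) =
          Finset.Icc ((Finset.Icc k (2*k-1)).card + 1) (2*(Finset.Icc k (2*k-1)).card)) := by
        rw [hcard]
        intro hcon
        have hm : k ∈ Finset.Icc k (2*k-1) := by rw [Finset.mem_Icc]; omega
        rw [hcon, Finset.mem_Icc] at hm
        omega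
      rw [iOf, if_neg hcnd, hcard]
      omega
    · set k := i.natAbs with hk
      rw [TOf, if_neg (by omega), ← hk]
      have hcard : (Finset.Icc (k+1) (2*k)).card = k := by rw [Nat.card_Icc]; omega
      have hcnd : Finset.Icc (k+1) (2*k) =
          Finset.Icc ((Finset.Icc (k+1) (2*k)).card + 1) (2*(Finset.Icc (k+1) (2*k)).card) := by
        rw [hcard]
      rw [iOf, if_pos hcnd, hcard]
      omega
  · -- values agree
    intro T hT
    rw [natAbs_iOf]

-- ============ glue ============
def eE (m : ℕ) : ℤ :=
  ∑ T ∈ ((Finset.Icc 1 m).powerset).filter (fun t => t.sum id = m), (-1:ℤ)^T.card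

def eJE (h m : ℕ) : ℤ :=
  ∑ T ∈ (((Finset.Icc 1 m).erase h).powerset).filter (fun t => t.sum id = m), (-1:ℤ)^T.card

lemma eJE_zero (m : ℕ) : eJE 0 m = eE m := by
  rw [eJE, eE, Finset.erase_eq_of_notMem (by simp : (0:ℕ) ∉ Finset.Icc 1 m)]

lemma eJE_big {h m : ℕ} (hm : m < h) : eJE h m = eE m := by
  rw [eJE, eE, Finset.erase_eq_of_notMem (by rw [Finset.mem_Icc]; omega)]

lemma eE_split (h s : ℕ) (h1 : 1 ≤ h) (hs : h ≤ s) : eE s = eJE h s - eJE h (s - h) := by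
  classical
  rw [eE, ← Finset.sum_filter_add_sum_filter_not
    (((Finset.Icc 1 s).powerset).filter (fun t => t.sum id = s)) (fun T => h ∈ T)]
  have e2 : ∑ T ∈ (((Finset.Icc 1 s).powerset).filter (fun t => t.sum id = s)).filter
      (fun T => ¬ h ∈ T), (-1:ℤ)^T.card = eJE h s := by
    rw [eJE]
    apply Finset.sum_congr _ (fun _ _ => rfl)
    ext T
    simp only [Finset.mem_filter, Finset.mem_powerset, Finset.subset_erase]
    tauto
  have e1 : ∑ T ∈ (((Finset.Icc 1 s).powerset).filter (fun t => t.sum id = s)).filter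
      (fun T => h ∈ T), (-1:ℤ)^T.card = - eJE h (s - h) := by
    rw [eJE, ← Finset.sum_neg_distrib]
    refine Finset.sum_bij' (fun T _ => T.erase h) (fun T _ => insert h T) ?hi ?hj ?ji ?ij ?vals
    case hi =>
      intro T hT
      simp only [Finset.mem_filter, Finset.mem_powerset] at hT ⊢
      obtain ⟨⟨hsub, hsum⟩, hmem⟩ := hT
      have hsum2 : (T.erase h).sum id + h = s := by
        rw [← hsum]
        exact Finset.sum_erase_add _ _ hmem
      constructor
      · rw [Finset.subset_erase]
        refine ⟨?_, Finset.notMem_erase _ _⟩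
        intro x hx
        have hx2 := Finset.mem_of_mem_erase hx
        have hb := (Finset.mem_Icc.mp (hsub hx2)).1
        have hle : x ≤ (T.erase h).sum id := le_sum_of_mem' hx
        rw [Finset.mem_Icc]
        omega
      · omega
    case hj =>
      intro T hT
      simp only [Finset.mem_filter, Finset.mem_powerset, Finset.subset_erase] at hT ⊢
      obtain ⟨⟨hsub, hnm⟩, hsum⟩ := hT
      have hsum2 : (insert h T).sum id = h + T.sum id := Finset.sum_insert hnm
      constructor
      · constructor
        · intro x hx
          rcases Finset.mem_insert.mp hx with hx | hx
          · rw [Finset.mem_Icc]; omega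
          · have h5 := Finset.mem_Icc.mp (hsub hx)
            have h6 : x ≤ T.sum id := le_sum_of_mem' hx
            rw [Finset.mem_Icc]
            omega
        · rw [hsum2, hsum]
          omega
      · exact Finset.mem_insert_self _ _
    case ji =>
      intro T hT
      simp only [Finset.mem_filter] at hT
      exact Finset.insert_erase hT.2
    case ij =>
      intro T hT
      simp only [Finset.mem_filter, Finset.mem_powerset, Finset.subset_erase] at hT
      exact Finset.erase_insert hT.1.2
    case vals =>
      intro T hT
      simp only [Finset.mem_filter] at hT
      have hc : T.card = (T.erase h).card + 1 := by
        rw [Finset.card_erase_of_mem hT.2]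
        have : 1 ≤ T.card := Finset.card_pos.mpr ⟨h, hT.2⟩
        omega
      rw [hc, pow_succ]
      ring
  rw [e1, e2]
  ring

lemma eJE_rec (h : ℕ) (h1 : 1 ≤ h) : ∀ s, eJE h s = ∑ q ∈ Finset.range (s/h + 1), eE (s - q*h) := by
  intro s
  induction s using Nat.strong_induction_on with
  | _ s ih =>
    rcases lt_or_ge s h with hlt | hle
    · rw [Nat.div_eq_of_lt hlt]
      simp [eJE_big hlt]
    · have hrec : eJE h s = eE s + eJE h (s - h) := by
        have := eE_split h s h1 hle
        omega
      have hdiv : s / h = (s - h)/h + 1 := by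
        rw [Nat.div_eq_sub_div (by omega) hle]
      rw [hrec, ih (s - h) (by omega), hdiv,
        Finset.sum_range_succ' (fun q => eE (s - q*h)) ((s-h)/h + 1), add_comm]
      congr 1
      · apply Finset.sum_congr rfl
        intro q _
        congr 1
        rw [Nat.sub_sub, show h + q*h = (q+1)*h by ring]
      · simp

lemma divisor_double (n : ℕ) :
    ∑ h ∈ Finset.Icc 1 n, ∑ q ∈ Finset.Icc 1 (n/h), eE (n - q*h)
    = ∑ j ∈ Finset.Icc 1 n, (j.divisors.card : ℤ) * eE (n - j) := by
  classical
  have hL : ∑ h ∈ Finset.Icc 1 n, ∑ q ∈ Finset.Icc 1 (n/h), eE (n - q*h)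
      = ∑ p ∈ (Finset.Icc 1 n).sigma (fun h => Finset.Icc 1 (n/h)), eE (n - p.2 * p.1) := by
    rw [Finset.sum_sigma]
  have hR : ∑ j ∈ Finset.Icc 1 n, (j.divisors.card : ℤ) * eE (n - j)
      = ∑ p ∈ (Finset.Icc 1 n).sigma (fun j => j.divisors), eE (n - p.1) := by
    rw [Finset.sum_sigma]
    apply Finset.sum_congr rfl
    intro j _
    have he : ∀ s ∈ j.divisors, eE (n - (⟨j, s⟩ : Σ _ : ℕ, ℕ).1) = eE (n - j) :=
      fun _ _ => rfl
    rw [Finset.sum_congr rfl he, Finset.sum_const, nsmul_eq_mul]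
  rw [hL, hR]
  refine Finset.sum_bij' (fun p _ => ⟨p.1 * p.2, p.1⟩) (fun p _ => ⟨p.2, p.1 / p.2⟩)
    ?hi ?hj ?ji ?ij ?vals
  case hi =>
    rintro ⟨h, q⟩ hp
    rw [Finset.mem_sigma, Finset.mem_Icc, Finset.mem_Icc] at hp
    dsimp only at hp ⊢
    obtain ⟨⟨h1, hn⟩, ⟨q1, hq⟩⟩ := hp
    rw [Finset.mem_sigma, Finset.mem_Icc]
    have hmul : h * q ≤ n := by
      rw [mul_comm]
      exact (Nat.le_div_iff_mul_le (by omega : 0 < h)).mp hq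
    refine ⟨⟨Nat.mul_pos (by omega) (by omega), hmul⟩, ?_⟩
    rw [Nat.mem_divisors]
    exact ⟨Dvd.intro q rfl, Nat.mul_ne_zero (by omega) (by omega)⟩
  case hj =>
    rintro ⟨j, d⟩ hp
    rw [Finset.mem_sigma, Finset.mem_Icc] at hp
    dsimp only at hp ⊢
    obtain ⟨⟨j1, hn⟩, hd⟩ := hp
    rw [Nat.mem_divisors] at hd
    obtain ⟨hdvd, hj0⟩ := hd
    have hd1 : 1 ≤ d := Nat.pos_of_dvd_of_pos hdvd (by omega)
    have hdj : d ≤ j := Nat.le_of_dvd (by omega) hdvd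
    rw [Finset.mem_sigma, Finset.mem_Icc, Finset.mem_Icc]
    refine ⟨⟨hd1, le_trans hdj hn⟩, ?_, ?_⟩
    · rw [Nat.le_div_iff_mul_le (by omega : 0 < d), one_mul]
      exact hdj
    · exact Nat.div_le_div_right hn
  case ji =>
    rintro ⟨h, q⟩ hp
    rw [Finset.mem_sigma, Finset.mem_Icc, Finset.mem_Icc] at hp
    dsimp only at hp ⊢
    obtain ⟨⟨h1, hn⟩, ⟨q1, hq⟩⟩ := hp
    exact congrArg (Sigma.mk h) (Nat.mul_div_cancel_left q (by omega))
  case ij =>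
    rintro ⟨j, d⟩ hp
    rw [Finset.mem_sigma, Finset.mem_Icc] at hp
    dsimp only at hp ⊢
    obtain ⟨⟨j1, hn⟩, hd⟩ := hp
    rw [Nat.mem_divisors] at hd
    have he : d * (j/d) = j := Nat.mul_div_cancel' hd.1
    rw [he]
  case vals =>
    rintro ⟨h, q⟩ _
    dsimp only
    rw [mul_comm]

lemma sigmaJ_eq_eJE (j k : ℕ) : sigmaJ j k = eJE j k := by
  rw [sigmaJ, coeff_prod_one_sub]; rfl

lemma sigmaSeq_eq (n : ℕ) : sigmaSeq n = ∑ j ∈ Finset.range (n+1), rho j * eE (n - j) := by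
  rw [sigmaSeq, Finset.sum_range_succ' (fun j => sigmaJ j (n - j)) n,
    Finset.sum_range_succ' (fun j => rho j * eE (n - j)) n]
  congr 1
  · -- main sums
    have hstep : ∀ i ∈ Finset.range n,
        sigmaJ (i+1) (n - (i+1)) = ∑ q ∈ Finset.Icc 1 (n/(i+1)), eE (n - q*(i+1)) := by
      intro i hi
      rw [Finset.mem_range] at hi
      set h := i + 1 with hh
      have h1 : 1 ≤ h := by omega
      have hhn : h ≤ n := by omega
      rw [sigmaJ_eq_eJE, eJE_rec h h1 (n - h)]
      rw [← Finset.Ico_add_one_right_eq_Icc, Finset.sum_Ico_eq_sum_range]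
      have hdiv : n / h = (n - h)/h + 1 := Nat.div_eq_sub_div (by omega) hhn
      rw [hdiv, Nat.add_sub_cancel]
      apply Finset.sum_congr rfl
      intro q _
      congr 1
      rw [Nat.sub_sub, show h + q*h = (1+q)*h by ring]
    rw [Finset.sum_congr rfl hstep]
    have houter : ∑ i ∈ Finset.range n, ∑ q ∈ Finset.Icc 1 (n/(i+1)), eE (n - q*(i+1))
        = ∑ h ∈ Finset.Icc 1 n, ∑ q ∈ Finset.Icc 1 (n/h), eE (n - q*h) := by
      rw [← Finset.Ico_add_one_right_eq_Icc, Finset.sum_Ico_eq_sum_range]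
      have hc : n + 1 - 1 = n := by omega
      rw [hc]
      apply Finset.sum_congr rfl
      intro i _
      rw [show 1 + i = i + 1 by omega]
    rw [houter, divisor_double]
    rw [← Finset.Ico_add_one_right_eq_Icc, Finset.sum_Ico_eq_sum_range]
    have hc : n + 1 - 1 = n := by omega
    rw [hc]
    apply Finset.sum_congr rfl
    intro i _
    rw [show 1 + i = i + 1 by omega, rho, if_neg (by omega)]
  · -- zero term
    rw [Nat.sub_zero, sigmaJ_eq_eJE, eJE_zero, rho, if_pos rfl, one_mul]


lemma coeff_X_pow_mul'_s7 (φ : PowerSeries ℤ) (h n : ℕ) (hh : h ≤ n) :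
    PowerSeries.coeff (R := ℤ) n (PowerSeries.X^h * φ) = PowerSeries.coeff (R := ℤ) (n - h) φ := by
  conv_lhs => rw [show n = (n - h) + h from by omega]
  exact PowerSeries.coeff_X_pow_mul _ _ _


/-- `σ(n) = ∑_{j=0}^{n} σ_j(n-j)` is the coefficient of `x^n` in
`∑_{h≥0} x^h ∏_{m≥1, m≠h}(1 - x^m)`, and the pentagonal algorithm holds:
`∑_{i ∈ ℤ} (-1)^i ρ(n - (3i²+i)/2) = σ(n)`, the sum over `i` being finite since `ρ`
vanishes on negative arguments (indices with `|i| > n + 1` contribute nothing). -/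
theorem stmt7 (n : ℕ) :
    sigmaSeq n =
      ∑ h ∈ Finset.range (n+1),
        PowerSeries.coeff (R := ℤ) n
          (PowerSeries.X ^ h * ∏ m ∈ (Finset.Icc 1 n).erase h, (1 - PowerSeries.X ^ m)) ∧
    ∑ i ∈ Finset.Icc (-(n : ℤ) - 1) ((n : ℤ) + 1),
        (-1) ^ i.natAbs * rhoZ ((n : ℤ) - (3 * i ^ 2 + i) / 2) = sigmaSeq n := by
  constructor
  · -- Part 1
    rw [sigmaSeq]
    apply Finset.sum_congr rfl
    intro h hh
    rw [Finset.mem_range] at hh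
    have hd : n = (n - h) + h := by omega
    rw [sigmaJ_eq_eJE, coeff_X_pow_mul'_s7 _ h n (by omega), coeff_prod_one_sub,
      filter_powerset_erase_eq n (n - h) h (by omega)]
    rfl
  · -- Part 2
    have key : ∀ i : ℤ, ((-1:ℤ))^i.natAbs * rhoZ ((n:ℤ) - (3*i^2+i)/2)
        = ∑ j ∈ Finset.range (n+1),
            rho j * (if (3*i^2+i)/2 = ((n-j : ℕ):ℤ) then (-1:ℤ)^i.natAbs else 0) := by
      intro i
      have h2g := pent_two_mul i
      set g : ℤ := (3*i^2+i)/2 with hg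
      have hg0 : 0 ≤ g := by
        rcases le_or_gt 0 i with h | h
        · nlinarith [h2g, sq_nonneg i]
        · have hi1 : i ≤ -1 := by omega
          nlinarith [h2g]
      rcases le_or_gt g (n:ℤ) with hgn | hgn
      · set j0 : ℕ := ((n:ℤ) - g).toNat with hj0
        have hj0mem : j0 ∈ Finset.range (n+1) := by
          rw [Finset.mem_range]
          omega
        have hsc : ∀ j ∈ Finset.range (n+1),
            rho j * (if g = ((n-j : ℕ):ℤ) then (-1:ℤ)^i.natAbs else 0)
            = if j = j0 then rho j * (-1:ℤ)^i.natAbs else 0 := by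
          intro j hj
          rw [Finset.mem_range] at hj
          have hcast : ((n - j : ℕ):ℤ) = (n:ℤ) - j := by
            rw [Nat.cast_sub (by omega)]
          have hiff : (g = ((n-j : ℕ):ℤ)) ↔ (j = j0) := by
            rw [hcast]
            constructor <;> intro hx <;> omega
          rw [if_congr hiff rfl rfl]
          split <;> ring
        rw [Finset.sum_congr rfl hsc, Finset.sum_ite_eq' (Finset.range (n+1)) j0
          (fun j => rho j * (-1:ℤ)^i.natAbs), if_pos hj0mem]
        rw [rhoZ, if_pos (by omega : (0:ℤ) ≤ (n:ℤ) - g)]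
        have : ((n:ℤ) - g).toNat = j0 := rfl
        rw [this]
        ring
      · rw [rhoZ, if_neg (by omega), mul_zero]
        symm
        apply Finset.sum_eq_zero
        intro j hj
        have hc : ((n - j : ℕ):ℤ) ≤ (n:ℤ) := by
          have := Nat.sub_le n j
          exact_mod_cast Nat.cast_le.mpr this
        rw [if_neg (by omega), mul_zero]
    calc ∑ i ∈ Finset.Icc (-(n : ℤ) - 1) ((n : ℤ) + 1),
          (-1) ^ i.natAbs * rhoZ ((n : ℤ) - (3 * i ^ 2 + i) / 2)
        = ∑ i ∈ Finset.Icc (-(n : ℤ) - 1) ((n : ℤ) + 1), ∑ j ∈ Finset.range (n+1),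
            rho j * (if (3*i^2+i)/2 = ((n-j : ℕ):ℤ) then (-1:ℤ)^i.natAbs else 0) :=
          Finset.sum_congr rfl (fun i _ => key i)
      _ = ∑ j ∈ Finset.range (n+1), ∑ i ∈ Finset.Icc (-(n : ℤ) - 1) ((n : ℤ) + 1),
            rho j * (if (3*i^2+i)/2 = ((n-j : ℕ):ℤ) then (-1:ℤ)^i.natAbs else 0) :=
          Finset.sum_comm
      _ = ∑ j ∈ Finset.range (n+1), rho j * eE (n - j) := by
          apply Finset.sum_congr rfl
          intro j hj
          rw [Finset.mem_range] at hj
          rw [← Finset.mul_sum, ← franklin (n - j) n (by omega)]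
          rfl
      _ = sigmaSeq n := (sigmaSeq_eq n).symm
end

section
/- For every n ≥ 1, ρ(n) = σ(n) + ∑_{i ∈ ℤ, i ≠ 0} (-1)^{i+1} ρ(n - (3i² + i)/2), a finite sum, where ρ(m) = 0 for m < 0 and ρ(m) is the number of divisors of m ≥ 1; this recursion together with ρ(0) = 1 = σ(0) determines ρ from σ. -/
open PowerSeries Finset

noncomputable def Ep (a b : ℕ) : PowerSeries ℤ := ∏ i ∈ Finset.Icc a b, (1 - PowerSeries.X ^ i)

def tri : ℕ → ℕ
  | 0 => 0
  | (j+1) => tri j + (j+1)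

lemma two_tri (j : ℕ) : 2 * tri j = j * (j+1) := by
  induction j with
  | zero => rfl
  | succ k ih => simp [tri]; ring_nf; ring_nf at ih; omega

def gp (j : ℕ) : ℕ := j*j + tri j
def gm (j : ℕ) : ℕ := (j-1)*j + tri j

noncomputable def Tt (m j : ℕ) : PowerSeries ℤ := PowerSeries.X ^ (j*m + tri j) * Ep (j+1) m

noncomputable def pentP (m : ℕ) : PowerSeries ℤ :=
  1 + ∑ j ∈ Finset.Icc 1 m, (-1)^j * (PowerSeries.X ^ gp j + PowerSeries.X ^ gm j)

lemma Icc_succ_right' (a b : ℕ) (h : a ≤ b + 1) :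
    Finset.Icc a (b+1) = insert (b+1) (Finset.Icc a b) := by
  ext x; simp [Finset.mem_Icc, Finset.mem_insert]; omega

lemma Ep_succ (a m : ℕ) (h : a ≤ m + 1) :
    Ep a (m+1) = (1 - PowerSeries.X ^ (m+1)) * Ep a m := by
  unfold Ep
  rw [Icc_succ_right' a m h, Finset.prod_insert (by simp)]

lemma Ep_bot (a m : ℕ) (h : a ≤ m) :
    Ep a m = (1 - PowerSeries.X ^ a) * Ep (a+1) m := by
  unfold Ep
  rw [show Finset.Icc a m = insert a (Finset.Icc (a+1) m) by
    ext x; simp [Finset.mem_Icc, Finset.mem_insert]; omega,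
    Finset.prod_insert (by simp)]

lemma Ep_empty (a m : ℕ) (h : m < a) : Ep a m = 1 := by
  unfold Ep; rw [Finset.Icc_eq_empty (by omega), Finset.prod_empty]

lemma Tt_succ (m j : ℕ) (hj : j ≤ m) :
    Tt (m+1) j = PowerSeries.X^j * (1 - PowerSeries.X^(m+1)) * Tt m j := by
  unfold Tt
  rw [Ep_succ (j+1) m (by omega), show j*(m+1) + tri j = j + (j*m + tri j) by ring,
    pow_add]
  ring

lemma shanks (m : ℕ) :
    ∑ j ∈ Finset.range (m+1), (-1)^j * Tt m j = pentP m := by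
  induction m with
  | zero => simp [Tt, Ep, pentP, tri]
  | succ m ih =>
    have key : ∀ j ∈ Finset.range (m+1),
        (-1 : PowerSeries ℤ)^j * Tt (m+1) j
          = (-1)^j * Tt m j - (-1)^j * ((1 - PowerSeries.X^j) * Tt m j)
              - (-1)^j * (PowerSeries.X^(j+m+1) * Tt m j) := by
      intro j hj
      rw [Tt_succ m j (by simpa using Nat.lt_succ_iff.mp (Finset.mem_range.mp hj)),
        show j+m+1 = j + (m+1) by ring, pow_add]
      ring
    have htop : Tt (m+1) (m+1) = PowerSeries.X ^ gp (m+1) := by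
      unfold Tt
      rw [Ep_empty (m+2) (m+1) (by omega), mul_one, gp]
    have hshift : ∀ j, j < m →
        PowerSeries.X^(j+m+1) * Tt m j = (1 - PowerSeries.X^(j+1)) * Tt m (j+1) := by
      intro j hj
      unfold Tt
      rw [Ep_bot (j+1) m (by omega),
        show (j+1)*m + tri (j+1) = (j+m+1) + (j*m + tri j) by simp [tri]; ring,
        pow_add]
      ring
    have hmm : PowerSeries.X^(m+m+1) * Tt m m = PowerSeries.X ^ gm (m+1) := by
      unfold Tt
      rw [Ep_empty (m+1) m (by omega), mul_one, ← pow_add, gm]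
      congr 1
      simp [tri]
      ring
    have hS2 : ∑ j ∈ Finset.range (m+1), (-1:PowerSeries ℤ)^j * ((1 - PowerSeries.X^j) * Tt m j)
        = ∑ j ∈ Finset.range m, (-1:PowerSeries ℤ)^(j+1) * ((1 - PowerSeries.X^(j+1)) * Tt m (j+1)) := by
      rw [Finset.sum_range_succ']
      simp
    have hS3 : ∑ j ∈ Finset.range (m+1), (-1:PowerSeries ℤ)^j * (PowerSeries.X^(j+m+1) * Tt m j)
        = (∑ j ∈ Finset.range m, (-1:PowerSeries ℤ)^j * ((1 - PowerSeries.X^(j+1)) * Tt m (j+1)))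
            + (-1)^m * PowerSeries.X ^ gm (m+1) := by
      rw [Finset.sum_range_succ, show m+m+1 = m+m+1 by rfl, hmm]
      congr 1
      exact Finset.sum_congr rfl fun j hj => by rw [hshift j (Finset.mem_range.mp hj)]
    have hcancel : (∑ j ∈ Finset.range (m+1), (-1:PowerSeries ℤ)^j * ((1 - PowerSeries.X^j) * Tt m j))
        + (∑ j ∈ Finset.range (m+1), (-1:PowerSeries ℤ)^j * (PowerSeries.X^(j+m+1) * Tt m j))
        = (-1)^m * PowerSeries.X ^ gm (m+1) := by
      rw [hS2, hS3, ← add_assoc, ← Finset.sum_add_distrib]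
      rw [Finset.sum_eq_zero fun j hj => by ring_nf]
      ring
    have hpent : pentP (m+1) = pentP m + (-1)^(m+1) * (PowerSeries.X ^ gp (m+1) + PowerSeries.X ^ gm (m+1)) := by
      unfold pentP
      rw [Icc_succ_right' 1 m (by omega), Finset.sum_insert (by simp)]
      ring
    rw [Finset.sum_range_succ, Finset.sum_congr rfl key, htop, hpent, ← ih]
    rw [Finset.sum_sub_distrib, Finset.sum_sub_distrib]
    have := hcancel
    ring_nf
    ring_nf at this
    linear_combination -this

lemma tri_pos (j : ℕ) : 1 ≤ tri (j+1) := by simp [tri]; omega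

lemma coeff_Ep_pentP (m k : ℕ) (hk : k ≤ m) :
    PowerSeries.coeff (R := ℤ) k (Ep 1 m) = PowerSeries.coeff (R := ℤ) k (pentP m) := by
  have hs := shanks m
  rw [Finset.sum_range_succ'] at hs
  have h0 : ((-1:PowerSeries ℤ))^0 * Tt m 0 = Ep 1 m := by simp [Tt, tri]
  rw [h0] at hs
  rw [← hs, map_add, map_sum, Finset.sum_eq_zero, zero_add]
  intro j hj
  rw [show ((-1:PowerSeries ℤ))^(j+1) * Tt m (j+1)
      = PowerSeries.X^((j+1)*m + tri (j+1)) * ((-1)^(j+1) * Ep (j+2) m) by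
    unfold Tt; ring]
  rw [PowerSeries.coeff_X_pow_mul', if_neg]
  have h1 : m ≤ (j+1)*m := Nat.le_mul_of_pos_left m (by omega)
  have h2 := tri_pos j
  omega

noncomputable def R : PowerSeries ℤ := PowerSeries.mk (fun k => rho k)

noncomputable def Gd (d : ℕ) : PowerSeries ℤ :=
  PowerSeries.mk (fun k => if 0 < k ∧ d ∣ k then (1 : ℤ) else 0)

lemma gd_mul (d : ℕ) (hd : 1 ≤ d) :
    (1 - PowerSeries.X ^ d) * Gd d = PowerSeries.X ^ d := by
  ext k
  rw [sub_mul, one_mul, map_sub, PowerSeries.coeff_X_pow_mul', PowerSeries.coeff_X_pow]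
  simp only [Gd, PowerSeries.coeff_mk]
  by_cases hk : d ≤ k
  · rw [if_pos hk]
    by_cases hkd : k = d
    · subst hkd
      rw [if_pos rfl, if_pos ⟨by omega, dvd_rfl⟩, if_neg (by omega)]; ring
    · rw [if_neg hkd]
      have hdvd : d ∣ k ↔ d ∣ k - d :=
        ⟨fun h => Nat.dvd_sub h dvd_rfl,
         fun h => by
           have hh : k - d + d = k := by omega
           exact hh ▸ Nat.dvd_add h dvd_rfl⟩
      by_cases h2 : d ∣ k
      · rw [if_pos ⟨by omega, h2⟩, if_pos ⟨by omega, hdvd.mp h2⟩]; ring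
      · rw [if_neg (fun hh => h2 hh.2), if_neg (fun hh => h2 (hdvd.mpr hh.2))]; ring
  · rw [if_neg hk, if_neg (by omega : ¬ k = d), if_neg, sub_zero]
    rintro ⟨hk0, hkd⟩
    exact hk (Nat.le_of_dvd hk0 hkd)

lemma coeff_R_eq (n k : ℕ) (hk : k ≤ n) :
    PowerSeries.coeff (R := ℤ) k R
      = PowerSeries.coeff (R := ℤ) k (1 + ∑ d ∈ Finset.Icc 1 n, Gd d) := by
  rw [map_add, map_sum]
  simp only [Gd, PowerSeries.coeff_mk, PowerSeries.coeff_one, R]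
  rcases Nat.eq_zero_or_pos k with hk0 | hk0
  · subst hk0
    rw [Finset.sum_eq_zero (fun d hd => by simp), if_pos rfl]
    simp [rho]
  · rw [if_neg (by omega)]
    have hsum : ∑ d ∈ Finset.Icc 1 n, (if 0 < k ∧ d ∣ k then (1:ℤ) else 0)
        = ((Finset.Icc 1 n).filter (fun d => 0 < k ∧ d ∣ k)).card := by
      rw [Finset.card_filter]
      simp [Finset.sum_ite]
    rw [hsum]
    have hset : (Finset.Icc 1 n).filter (fun d => 0 < k ∧ d ∣ k) = k.divisors := by
      ext d
      simp only [Finset.mem_filter, Finset.mem_Icc, Nat.mem_divisors]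
      constructor
      · rintro ⟨⟨h1, h2⟩, h3, h4⟩; exact ⟨h4, by omega⟩
      · rintro ⟨h1, h2⟩
        have hd1 : 1 ≤ d := Nat.pos_of_dvd_of_pos h1 hk0
        have hdk : d ≤ k := Nat.le_of_dvd hk0 h1
        exact ⟨⟨hd1, by omega⟩, hk0, h1⟩
    rw [hset, rho, if_neg (by omega)]
    ring

lemma coeff_mul_congr_right (F A B : PowerSeries ℤ) (n : ℕ)
    (h : ∀ k ≤ n, PowerSeries.coeff (R := ℤ) k A = PowerSeries.coeff (R := ℤ) k B) :
    PowerSeries.coeff (R := ℤ) n (F * A) = PowerSeries.coeff (R := ℤ) n (F * B) := by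
  rw [PowerSeries.coeff_mul, PowerSeries.coeff_mul]
  refine Finset.sum_congr rfl fun p hp => ?_
  rw [Finset.HasAntidiagonal.mem_antidiagonal] at hp
  rw [h p.2 (by omega)]

lemma coeff_mul_congr_left (F A B : PowerSeries ℤ) (n : ℕ)
    (h : ∀ k ≤ n, PowerSeries.coeff (R := ℤ) k A = PowerSeries.coeff (R := ℤ) k B) :
    PowerSeries.coeff (R := ℤ) n (A * F) = PowerSeries.coeff (R := ℤ) n (B * F) := by
  rw [mul_comm A F, mul_comm B F]; exact coeff_mul_congr_right F A B n h

lemma trunc_lemma (j m N : ℕ) (hm : m ≤ N) :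
    PowerSeries.coeff (R := ℤ) m (∏ i ∈ (Finset.Icc 1 N).erase j, (1 - PowerSeries.X ^ i))
      = sigmaJ j m := by
  induction N, hm using Nat.le_induction with
  | base => rfl
  | succ N hN ih =>
    rw [← ih]
    by_cases hj : j = N + 1
    · subst hj
      congr 1
      apply Finset.prod_congr _ (fun _ _ => rfl)
      ext x
      simp only [Finset.mem_erase, Finset.mem_Icc]
      omega
    · have hset : (Finset.Icc 1 (N+1)).erase j = insert (N+1) ((Finset.Icc 1 N).erase j) := by
        ext x
        simp only [Finset.mem_erase, Finset.mem_Icc, Finset.mem_insert]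
        omega
      rw [hset, Finset.prod_insert (by simp only [Finset.mem_erase, Finset.mem_Icc]; omega)]
      rw [sub_mul, one_mul, map_sub, PowerSeries.coeff_X_pow_mul', if_neg (by omega), sub_zero]

lemma stepA (n : ℕ) : sigmaSeq n = PowerSeries.coeff (R := ℤ) n (Ep 1 n * R) := by
  have h1 : PowerSeries.coeff (R := ℤ) n (Ep 1 n * R)
      = PowerSeries.coeff (R := ℤ) n (Ep 1 n * (1 + ∑ d ∈ Finset.Icc 1 n, Gd d)) :=
    coeff_mul_congr_right _ _ _ n (fun k hk => coeff_R_eq n k hk)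
  rw [h1, mul_add, mul_one, Finset.mul_sum, map_add, map_sum]
  have h2 : PowerSeries.coeff (R := ℤ) n (Ep 1 n) = sigmaJ 0 (n - 0) := by
    rw [Nat.sub_zero, sigmaJ, Finset.erase_eq_of_notMem (by simp)]
    rfl
  have h3 : ∀ d ∈ Finset.Icc 1 n,
      PowerSeries.coeff (R := ℤ) n (Ep 1 n * Gd d) = sigmaJ d (n - d) := by
    intro d hd
    rw [Finset.mem_Icc] at hd
    have hfac : Ep 1 n = (∏ i ∈ (Finset.Icc 1 n).erase d, (1 - PowerSeries.X ^ i))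
        * (1 - PowerSeries.X ^ d) := by
      rw [Ep, Finset.prod_erase_mul _ _ (Finset.mem_Icc.mpr hd)]
    rw [hfac, mul_assoc, gd_mul d hd.1, PowerSeries.coeff_mul_X_pow', if_pos hd.2]
    exact trunc_lemma d (n - d) n (by omega)
  rw [Finset.sum_congr rfl h3, sigmaSeq]
  have hins : Finset.range (n+1) = insert 0 (Finset.Icc 1 n) := by
    ext x; simp only [Finset.mem_range, Finset.mem_insert, Finset.mem_Icc]; omega
  rw [hins, Finset.sum_insert (by simp), h2]

lemma coeff_Xpow_R (n a : ℕ) :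
    PowerSeries.coeff (R := ℤ) n (PowerSeries.X ^ a * R) = rhoZ ((n:ℤ) - a) := by
  rw [PowerSeries.coeff_X_pow_mul']
  unfold rhoZ R
  split_ifs with h1 h2 h3
  · rw [PowerSeries.coeff_mk]; congr 1; omega
  · omega
  · omega
  · rfl

lemma gp_big (n : ℕ) : n < gp (n+1) := by
  have h1 : n+1 ≤ (n+1)*(n+1) := Nat.le_mul_of_pos_left _ (by omega)
  unfold gp; omega

lemma gm_big (n : ℕ) : n < gm (n+1) := by
  have h1 : 2 * tri (n+1) = (n+1)*(n+2) := by rw [two_tri]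
  have h2 : (n+1)*2 ≤ (n+1)*(n+2) := Nat.mul_le_mul_left _ (by omega)
  unfold gm; omega

lemma stepC (n : ℕ) :
    PowerSeries.coeff (R := ℤ) n (pentP n * R)
      = rho n + ∑ j ∈ Finset.Icc 1 (n+1),
          (-1)^j * (rhoZ ((n:ℤ) - gp j) + rhoZ ((n:ℤ) - gm j)) := by
  have hC : ∀ j : ℕ, ((-1 : PowerSeries ℤ)^j) = PowerSeries.C (R := ℤ) ((-1)^j) := by
    intro j; rw [map_pow, map_neg, map_one]
  rw [pentP, add_mul, one_mul, Finset.sum_mul, map_add, map_sum]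
  have hterm : ∀ j ∈ Finset.Icc 1 n,
      PowerSeries.coeff (R := ℤ) n (((-1 : PowerSeries ℤ)^j * (PowerSeries.X ^ gp j + PowerSeries.X ^ gm j)) * R)
        = (-1)^j * (rhoZ ((n:ℤ) - gp j) + rhoZ ((n:ℤ) - gm j)) := by
    intro j hj
    rw [mul_assoc, hC, PowerSeries.coeff_C_mul, add_mul, map_add, coeff_Xpow_R, coeff_Xpow_R]
  rw [Finset.sum_congr rfl hterm]
  have hR : PowerSeries.coeff (R := ℤ) n R = rho n := PowerSeries.coeff_mk n _
  rw [hR]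
  congr 1
  rw [Icc_succ_right' 1 n (by omega), Finset.sum_insert (by simp)]
  have hz1 : rhoZ ((n:ℤ) - gp (n+1)) = 0 := by
    have := gp_big n
    rw [rhoZ, if_neg (by push_cast; omega)]
  have hz2 : rhoZ ((n:ℤ) - gm (n+1)) = 0 := by
    have := gm_big n
    rw [rhoZ, if_neg (by push_cast; omega)]
  rw [hz1, hz2]
  ring

lemma master (n : ℕ) : sigmaSeq n
    = rho n + ∑ j ∈ Finset.Icc 1 (n+1),
        (-1)^j * (rhoZ ((n:ℤ) - gp j) + rhoZ ((n:ℤ) - gm j)) := by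
  rw [stepA, coeff_mul_congr_left R (Ep 1 n) (pentP n) n (fun k hk => coeff_Ep_pentP n k hk),
    stepC]

lemma gp_cast (j : ℕ) : (3 * (j:ℤ)^2 + j) / 2 = (gp j : ℤ) := by
  have ht : 2 * (tri j : ℤ) = j * (j+1) := by exact_mod_cast two_tri j
  have h2 : (3 * (j:ℤ)^2 + j) = 2 * (gp j : ℤ) := by
    unfold gp; push_cast; linear_combination -ht
  rw [h2, Int.mul_ediv_cancel_left _ (by norm_num)]

lemma gm_cast (j : ℕ) (hj : 1 ≤ j) : (3 * (-(j:ℤ))^2 + (-(j:ℤ))) / 2 = (gm j : ℤ) := by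
  have ht : 2 * (tri j : ℤ) = j * (j+1) := by exact_mod_cast two_tri j
  have h2 : (3 * (-(j:ℤ))^2 + (-(j:ℤ))) = 2 * (gm j : ℤ) := by
    unfold gm; push_cast [Nat.cast_sub hj]; linear_combination -ht
  rw [h2, Int.mul_ediv_cancel_left _ (by norm_num)]

theorem aux_final (n : ℕ) (hn : 1 ≤ n) :
    rhoZ n = sigmaSeq n +
      ∑ i ∈ (Finset.Icc (-(n : ℤ) - 1) ((n : ℤ) + 1)).erase 0,
        (-1) ^ (i.natAbs + 1) * rhoZ ((n : ℤ) - (3 * i ^ 2 + i) / 2) ∧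
    rhoZ 0 = 1 ∧ sigmaSeq 0 = 1 := by
  refine ⟨?_, ?_, ?_⟩
  · set f : ℤ → ℤ := fun i => (-1) ^ (i.natAbs + 1) * rhoZ ((n : ℤ) - (3 * i ^ 2 + i) / 2)
      with hf
    have hsplit : (Finset.Icc (-(n : ℤ) - 1) ((n : ℤ) + 1)).erase 0
        = (Finset.Icc (1:ℤ) ((n:ℤ)+1)) ∪ (Finset.Icc (1:ℤ) ((n:ℤ)+1)).image Neg.neg := by
      ext i
      simp only [Finset.mem_erase, Finset.mem_Icc, Finset.mem_union, Finset.mem_image]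
      constructor
      · rintro ⟨h0, h1, h2⟩
        rcases lt_or_ge i 0 with h | h
        · right; exact ⟨-i, ⟨by omega, by omega⟩, by omega⟩
        · left; omega
      · rintro (h | ⟨a, ⟨ha1, ha2⟩, rfl⟩) <;> omega
    have hdisj : Disjoint (Finset.Icc (1:ℤ) ((n:ℤ)+1))
        ((Finset.Icc (1:ℤ) ((n:ℤ)+1)).image Neg.neg) := by
      rw [Finset.disjoint_left]
      intro i hi hi'
      simp only [Finset.mem_Icc] at hi
      simp only [Finset.mem_image, Finset.mem_Icc] at hi'
      obtain ⟨a, ⟨ha1, _⟩, ha3⟩ := hi'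
      omega
    have hcast : Finset.Icc (1:ℤ) ((n:ℤ)+1)
        = (Finset.Icc 1 (n+1) : Finset ℕ).image (Nat.cast : ℕ → ℤ) := by
      ext i
      simp only [Finset.mem_Icc, Finset.mem_image]
      constructor
      · intro h; exact ⟨i.toNat, by omega, by omega⟩
      · rintro ⟨a, ha, rfl⟩; omega
    have e1 : ∑ i ∈ Finset.Icc (1:ℤ) ((n:ℤ)+1), f i
        = ∑ j ∈ Finset.Icc 1 (n+1), f (j : ℤ) := by
      rw [hcast, Finset.sum_image (fun a _ b _ h => Nat.cast_injective h)]
    have e2 : ∑ i ∈ (Finset.Icc (1:ℤ) ((n:ℤ)+1)).image Neg.neg, f i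
        = ∑ j ∈ Finset.Icc 1 (n+1), f (-(j : ℤ)) := by
      rw [Finset.sum_image (fun a _ b _ h => neg_injective h), hcast,
        Finset.sum_image (fun a _ b _ h => Nat.cast_injective h)]
    rw [hsplit, Finset.sum_union hdisj, e1, e2]
    have hterm1 : ∀ j ∈ Finset.Icc 1 (n+1),
        f (j : ℤ) = -((-1)^j * rhoZ ((n:ℤ) - gp j)) := by
      intro j hj
      rw [hf]
      simp only []
      rw [gp_cast, Int.natAbs_natCast, pow_succ]
      ring
    have hterm2 : ∀ j ∈ Finset.Icc 1 (n+1),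
        f (-(j : ℤ)) = -((-1)^j * rhoZ ((n:ℤ) - gm j)) := by
      intro j hj
      rw [Finset.mem_Icc] at hj
      rw [hf]
      simp only []
      rw [gm_cast j hj.1, Int.natAbs_neg, Int.natAbs_natCast, pow_succ]
      ring
    rw [Finset.sum_congr rfl hterm1, Finset.sum_congr rfl hterm2]
    have hm := master n
    have hrz : rhoZ (n:ℤ) = rho n := by
      rw [rhoZ, if_pos (by omega), Int.toNat_natCast]
    have hsum2 : ∑ j ∈ Finset.Icc 1 (n+1),
        (-1:ℤ)^j * (rhoZ ((n:ℤ) - gp j) + rhoZ ((n:ℤ) - gm j))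
        = (∑ j ∈ Finset.Icc 1 (n+1), (-1:ℤ)^j * rhoZ ((n:ℤ) - gp j))
          + ∑ j ∈ Finset.Icc 1 (n+1), (-1:ℤ)^j * rhoZ ((n:ℤ) - gm j) := by
      rw [← Finset.sum_add_distrib]
      exact Finset.sum_congr rfl fun j _ => mul_add _ _ _
    rw [hrz, hm, hsum2, Finset.sum_neg_distrib, Finset.sum_neg_distrib]
    ring
  · simp [rhoZ, rho]
  · simp [sigmaSeq, sigmaJ]

/-- The pentagonal algorithm for `ρ`: for `n ≥ 1`,
`ρ(n) = σ(n) + ∑_{i ∈ ℤ, i ≠ 0} (-1)^{i+1} ρ(n - (3i²+i)/2)`, a finite sum (indices with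
`|i| > n + 1` contribute nothing); together with `ρ(0) = 1 = σ(0)` this recursion
determines `ρ` from `σ`. -/
theorem stmt16 (n : ℕ) (hn : 1 ≤ n) :
    rhoZ n = sigmaSeq n +
      ∑ i ∈ (Finset.Icc (-(n : ℤ) - 1) ((n : ℤ) + 1)).erase 0,
        (-1) ^ (i.natAbs + 1) * rhoZ ((n : ℤ) - (3 * i ^ 2 + i) / 2) ∧
    rhoZ 0 = 1 ∧ sigmaSeq 0 = 1 := by
  exact aux_final n hn
end
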